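/- arXiv:1909.12783 — 3 statements merged into one kernel-verified Lean document; each statement's English description precedes it below -/
import Mathlib

section
/- Let F be a saturated fusion system on a finite 2-group S. Then the trace map tr^F_S : B(S)^× → (B(S)^×)^{Out_F(S)} is split surjective, B(S)^× = Ker(tr^F_S) × (B(S)^×)^{Out_F(S)}, and B(F)^× ≤ (B(S)^×)^{Out_F(S)}. -/
namespace BurnsideFusion

/-! ### The Burnside ring, realized via marks inside the ghost ring -/

/-- The vector of marks of the transitive `G`-set `G/K`:
its value at `H ≤ G` is the number of `H`-fixed points of `G/K`. -/
noncomputable def markVector (G : Type*) [Group G] (K : Subgroup G) : Subgroup G → ℤ :=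
  fun H => (Nat.card {x : G ⧸ K // ∀ h : G, h ∈ H → h • x = x} : ℤ)

/-- The Burnside ring of `G`, realized (faithfully, via the injective mark homomorphism)
as the subring of the ghost ring `∏_{H ≤ G} ℤ` generated by the marks of the
transitive `G`-sets `G/K`.  The mark of an element `a` at `H` is just `a H`. -/
noncomputable def burnsideRing (G : Type*) [Group G] : Subring (Subgroup G → ℤ) :=
  Subring.closure (Set.range (markVector G))

/-- The unit group `B(G)^×` of the Burnside ring, as a set:
since every unit of `B(G)` has all marks `±1`, the units are exactly the
elements squaring to `1`. -/
def burnsideUnits (G : Type*) [Group G] : Set (Subgroup G → ℤ) :=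
  {b | b ∈ burnsideRing G ∧ b * b = 1}

/-- Restriction `B(G) → B(S)` for `S ≤ G`, on marks:
`(n_H)_{H ≤ G} ↦ (n_P)_{P ≤ S}`. -/
def resMark {G : Type*} [Group G] (S : Subgroup G) (b : Subgroup G → ℤ) :
    Subgroup ↥S → ℤ :=
  fun P => b (P.map S.subtype)

/-- The action of a (bijective) endomorphism `f` of `G` on the ghost ring, on marks:
`(f · b)_Q = b_{f⁻¹(Q)}`. -/
def autAct {G : Type*} [Group G] (f : G →* G) (b : Subgroup G → ℤ) : Subgroup G → ℤ :=
  fun Q => b (Q.comap f)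

/-- The elements of the Burnside ring fixed by a set `A` of automorphisms of `G`.
(For `A = Aut_F(P)` this is `B(P)^{Out_F(P)}`, since the inner automorphisms
act trivially on `B(P)`.) -/
def fixedBurnside (G : Type*) [Group G] (A : Set (MulAut G)) : Set (Subgroup G → ℤ) :=
  {b | b ∈ burnsideRing G ∧ ∀ α ∈ A, autAct α.toMonoidHom b = b}

/-- The units of the Burnside ring fixed by a set `A` of automorphisms of `G`. -/
def fixedUnits (G : Type*) [Group G] (A : Set (MulAut G)) : Set (Subgroup G → ℤ) :=
  {b | b ∈ burnsideUnits G ∧ ∀ α ∈ A, autAct α.toMonoidHom b = b}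

/-- The relative trace map `tr^Γ_Δ` on the (units of the) Burnside ring:
the product of `α · b` over a set of representatives `α` of the cosets `Γ/Δ`. -/
noncomputable def relTrace {G : Type*} [Group G] (Γ Δ : Subgroup (MulAut G))
    (b : Subgroup G → ℤ) : Subgroup G → ℤ :=
  ∏ᶠ c : ↥Γ ⧸ Δ.subgroupOf Γ, autAct ((Quotient.out c : ↥Γ) : MulAut G).toMonoidHom b

/-! ### Fusion systems -/

/-- The homomorphism `P → Q` induced by conjugation by `s`. -/
def conjMap {S : Type*} [Group S] (s : S) (P Q : Subgroup S)
    (h : ∀ x ∈ P, s * x * s⁻¹ ∈ Q) : ↥P →* ↥Q where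
  toFun x := ⟨s * ↑x * s⁻¹, h x x.2⟩
  map_one' := by ext; simp
  map_mul' x y := by ext; simp

/-- A fusion system `F` on a group `S`: a category whose objects are the subgroups
of `S` and whose morphisms are injective group homomorphisms, containing all the
homomorphisms induced by conjugation in `S`, and such that every morphism factors
as an isomorphism in `F` followed by an inclusion. -/
structure FusionSystem (S : Type*) [Group S] where
  /-- The set of `F`-morphisms `P → Q`. -/
  Hom : ∀ P Q : Subgroup S, Set (↥P →* ↥Q)
  /-- All morphisms are injective. -/
  inj : ∀ {P Q : Subgroup S} {f : ↥P →* ↥Q}, f ∈ Hom P Q → Function.Injective f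
  /-- `Hom_S(P,Q) ⊆ Hom_F(P,Q)`. -/
  conj_mem : ∀ (s : S) (P Q : Subgroup S) (h : ∀ x ∈ P, s * x * s⁻¹ ∈ Q),
    conjMap s P Q h ∈ Hom P Q
  /-- Morphisms compose. -/
  comp_mem : ∀ {P Q R : Subgroup S} {f : ↥P →* ↥Q} {g : ↥Q →* ↥R},
    f ∈ Hom P Q → g ∈ Hom Q R → g.comp f ∈ Hom P R
  /-- Every morphism factors as an isomorphism in `F` onto its image followed by an
  inclusion. -/
  factor_mem : ∀ {P Q : Subgroup S} {f : ↥P →* ↥Q}, f ∈ Hom P Q →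
    ∃ (R : Subgroup S) (_ : R ≤ Q) (e : ↥P ≃* ↥R), e.toMonoidHom ∈ Hom P R ∧
      ∀ x : ↥P, ((e x : ↥R) : S) = ((f x : ↥Q) : S)
  /-- Isomorphisms in `F` are invertible in `F`. -/
  isoinv_mem : ∀ {P Q : Subgroup S} (e : ↥P ≃* ↥Q),
    e.toMonoidHom ∈ Hom P Q → e.symm.toMonoidHom ∈ Hom Q P

namespace FusionSystem

variable {S : Type*} [Group S] (F : FusionSystem S)

/-- Two subgroups of `S` are `F`-conjugate (isomorphic in `F`). -/
def SubConj (P Q : Subgroup S) : Prop :=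
  ∃ f ∈ F.Hom P Q, Function.Surjective ⇑f

/-- Two elements of `S` are `F`-conjugate: some `F`-isomorphism `⟨x⟩ → ⟨y⟩` sends
`x` to `y`. -/
def ElemConj (x y : S) : Prop :=
  ∃ f ∈ F.Hom (Subgroup.zpowers x) (Subgroup.zpowers y),
    f ⟨x, Subgroup.mem_zpowers x⟩ = ⟨y, Subgroup.mem_zpowers y⟩

/-- A subgroup `P ≤ S` is strongly closed in `F` if the `F`-conjugacy class of every
element of `P` is contained in `P`. -/
def StronglyClosed (P : Subgroup S) : Prop :=
  ∀ x ∈ P, ∀ y : S, F.ElemConj x y → y ∈ P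

/-- A subgroup `P` is normal in `F`: every morphism `φ ∈ Hom_F(Q,R)` extends to a
morphism `ψ ∈ Hom_F(QP, RP)` with `ψ|_Q = φ` and `ψ(P) = P`. -/
def NormalIn (P : Subgroup S) : Prop :=
  ∀ (Q R : Subgroup S), ∀ φ ∈ F.Hom Q R,
    ∃ ψ ∈ F.Hom (Q ⊔ P) (R ⊔ P),
      (∀ (x : S) (hx : x ∈ Q),
        ((ψ ⟨x, Subgroup.mem_sup_left hx⟩ : ↥(R ⊔ P)) : S) = ((φ ⟨x, hx⟩ : ↥R) : S)) ∧
      (∀ (x : S) (hx : x ∈ P),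
        ((ψ ⟨x, Subgroup.mem_sup_right hx⟩ : ↥(R ⊔ P)) : S) ∈ P) ∧
      (∀ y ∈ P, ∃ (x : S) (hx : x ∈ P),
        ((ψ ⟨x, Subgroup.mem_sup_right hx⟩ : ↥(R ⊔ P)) : S) = y)

/-- `Aut_F(P)`: the group of `F`-automorphisms of `P`. -/
def AutF (P : Subgroup S) : Subgroup (MulAut ↥P) where
  carrier := {α | α.toMonoidHom ∈ F.Hom P P}
  one_mem' := by
    have h : ∀ x ∈ P, (1 : S) * x * (1 : S)⁻¹ ∈ P := fun x hx => by simpa using hx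
    have h1 := F.conj_mem 1 P P h
    have e : conjMap (1 : S) P P h = (1 : MulAut ↥P).toMonoidHom := by
      ext x; simp [conjMap]
    rwa [e] at h1
  mul_mem' := by
    intro α β hα hβ
    have h := F.comp_mem hβ hα
    have e : α.toMonoidHom.comp β.toMonoidHom = (α * β).toMonoidHom := rfl
    rwa [e] at h
  inv_mem' := by
    intro α hα
    exact F.isoinv_mem α hα

end FusionSystem

/-- The conjugation automorphism of `P` induced by an element of its normalizer. -/
def conjAut {S : Type*} [Group S] (P : Subgroup S) (s : ↥(Subgroup.normalizer (P : Set S))) : MulAut ↥P where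
  toFun x := ⟨(s : S) * ↑x * (s : S)⁻¹, (Subgroup.mem_normalizer_iff.mp s.2 ↑x).mp x.2⟩
  invFun x := ⟨(s : S)⁻¹ * ↑x * (s : S), by
    have h := (Subgroup.mem_normalizer_iff.mp ((Subgroup.normalizer (P : Set S)).inv_mem s.2) (↑x : S)).mp x.2
    simpa using h⟩
  left_inv x := by ext; simp; group
  right_inv x := by ext; simp; group
  map_mul' x y := by ext; simp

/-- The homomorphism `N_S(P) → Aut(P)` given by conjugation. -/
def conjAutHom {S : Type*} [Group S] (P : Subgroup S) : ↥(Subgroup.normalizer (P : Set S)) →* MulAut ↥P where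
  toFun := conjAut P
  map_one' := by ext x; simp [conjAut]
  map_mul' s t := by ext x; simp [conjAut]; group

/-- `Aut_S(P)`: the subgroup of `Aut(P)` of automorphisms induced by conjugation in `S`. -/
def AutS {S : Type*} [Group S] (P : Subgroup S) : Subgroup (MulAut ↥P) :=
  (conjAutHom P).range

end BurnsideFusion

namespace BurnsideFusion

variable {S : Type*} [Group S]

/-- The automorphism of `⊤ ≤ S` induced by an automorphism of `S`. -/
def topRestrict (α : MulAut S) : MulAut ↥(⊤ : Subgroup S) :=
  (Subgroup.topEquiv.trans α).trans Subgroup.topEquiv.symm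

theorem topRestrict_one : topRestrict (1 : MulAut S) = 1 := by
  ext x; simp [topRestrict]

theorem topRestrict_mul (α β : MulAut S) :
    topRestrict (α * β) = topRestrict α * topRestrict β := by
  ext x; simp [topRestrict]

theorem topRestrict_inv (α : MulAut S) :
    topRestrict α⁻¹ = (topRestrict α).symm := by
  ext x; simp [topRestrict, MulAut.inv_def]

/-- `Aut_F(S)`, realized as a subgroup of `Aut(S)`. -/
def FusionSystem.AutFS (F : FusionSystem S) : Subgroup (MulAut S) where
  carrier := {α | (topRestrict α).toMonoidHom ∈ F.Hom ⊤ ⊤}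
  one_mem' := by
    have h := (F.AutF ⊤).one_mem
    have h' : (1 : MulAut ↥(⊤ : Subgroup S)).toMonoidHom ∈ F.Hom ⊤ ⊤ := h
    simpa [Set.mem_setOf_eq, topRestrict_one] using h'
  mul_mem' := by
    intro α β hα hβ
    have h := F.comp_mem (hβ : (topRestrict β).toMonoidHom ∈ F.Hom ⊤ ⊤) hα
    have e : (topRestrict α).toMonoidHom.comp (topRestrict β).toMonoidHom
        = (topRestrict (α * β)).toMonoidHom := by
      rw [topRestrict_mul]; rfl
    show (topRestrict (α * β)).toMonoidHom ∈ F.Hom ⊤ ⊤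
    rw [← e]; exact h
  inv_mem' := by
    intro α hα
    have h := F.isoinv_mem (topRestrict α) hα
    simpa [Set.mem_setOf_eq, topRestrict_inv] using h

end BurnsideFusion

namespace BurnsideFusion

variable {S : Type*} [Group S]

namespace FusionSystem

variable (F : FusionSystem S)

/-- `P` is fully normalized in `F`: its normalizer has maximal order in its
`F`-conjugacy class. -/
def FullyNormalized (P : Subgroup S) : Prop :=
  ∀ Q : Subgroup S, F.SubConj P Q → Nat.card ↥(Subgroup.normalizer (Q : Set S)) ≤ Nat.card ↥(Subgroup.normalizer (P : Set S))

/-- `P` is fully centralized in `F`: its centralizer has maximal order in its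
`F`-conjugacy class. -/
def FullyCentralized (P : Subgroup S) : Prop :=
  ∀ Q : Subgroup S, F.SubConj P Q →
    Nat.card ↥(Subgroup.centralizer (Q : Set S)) ≤ Nat.card ↥(Subgroup.centralizer (P : Set S))

/-- `P` is `F`-centric: every `F`-conjugate `Q` of `P` satisfies `C_S(Q) ≤ Q`. -/
def Centric (P : Subgroup S) : Prop :=
  ∀ Q : Subgroup S, F.SubConj P Q → Subgroup.centralizer (Q : Set S) ≤ Q

/-- `P` is fully `F`-automized: `Aut_S(P)` is a Sylow `p`-subgroup of `Aut_F(P)`. -/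
def FullyAutomized (p : ℕ) (P : Subgroup S) : Prop :=
  AutS P ≤ F.AutF P ∧ IsPGroup p ↥((AutS P).subgroupOf (F.AutF P)) ∧
    ¬ p ∣ ((AutS P).subgroupOf (F.AutF P)).index

end FusionSystem

/-- For an `F`-isomorphism `φ : P → Q`, the subset
`N_φ = { g ∈ N_S(P) | φ ∘ c_g ∘ φ⁻¹ ∈ Aut_S(Q) }` of `S`. -/
def NphiSet (P Q : Subgroup S) (φ : ↥P ≃* ↥Q) : Set S :=
  {g | ∃ hg : g ∈ Subgroup.normalizer (P : Set S), ∃ h : S, ∀ (x : S) (hx : x ∈ P),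
    ((φ ⟨g * x * g⁻¹, (Subgroup.mem_normalizer_iff.mp hg x).mp hx⟩ : ↥Q) : S)
      = h * ((φ ⟨x, hx⟩ : ↥Q) : S) * h⁻¹}

namespace FusionSystem

variable (F : FusionSystem S)

/-- `Q` is receptive in `F`: every `F`-isomorphism `φ : P → Q` extends to a morphism
in `F` defined on `N_φ`. -/
def Receptive (Q : Subgroup S) : Prop :=
  ∀ (P : Subgroup S) (φ : ↥P ≃* ↥Q), φ.toMonoidHom ∈ F.Hom P Q →
    ∃ T : Subgroup S, (T : Set S) = NphiSet P Q φ ∧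
      ∃ ψ ∈ F.Hom T ⊤, ∀ (x : S) (hx : x ∈ P) (hx' : x ∈ T),
        ((ψ ⟨x, hx'⟩ : ↥(⊤ : Subgroup S)) : S) = ((φ ⟨x, hx⟩ : ↥Q) : S)

/-- `F` is saturated: every `F`-conjugacy class of subgroups contains a fully
automized, receptive member. -/
def IsSaturated (p : ℕ) : Prop :=
  ∀ P : Subgroup S, ∃ Q : Subgroup S, F.SubConj P Q ∧ F.FullyAutomized p Q ∧ F.Receptive Q

end FusionSystem

theorem innRange_subgroupOf_normal (F : FusionSystem S) (P : Subgroup S) :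
    (((MulAut.conj : ↥P →* MulAut ↥P).range).subgroupOf (F.AutF P)).Normal := by
  have h : ((MulAut.conj : ↥P →* MulAut ↥P).range).Normal := by
    constructor
    intro n hn g
    obtain ⟨x, rfl⟩ := hn
    refine ⟨g x, ?_⟩
    ext y
    simp [MulAut.conj_apply, MulAut.inv_def, mul_assoc]
  exact h.subgroupOf _

/-- `Out_F(P) = Aut_F(P)/Inn(P)`. -/
def OutF (F : FusionSystem S) (P : Subgroup S) : Type _ :=
  ↥(F.AutF P) ⧸ ((MulAut.conj : ↥P →* MulAut ↥P).range.subgroupOf (F.AutF P))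

noncomputable instance (F : FusionSystem S) (P : Subgroup S) : Group (OutF F P) :=
  letI := innRange_subgroupOf_normal F P
  QuotientGroup.Quotient.group _

/-- A strongly `p`-embedded subgroup: a proper subgroup `H < Γ` such that `p` divides
`|H|` and `p` does not divide `|H ∩ gHg⁻¹|` for every `g ∉ H`. -/
def IsStronglyPEmbedded (p : ℕ) {Γ : Type*} [Group Γ] (H : Subgroup Γ) : Prop :=
  H ≠ ⊤ ∧ p ∣ Nat.card ↥H ∧
    ∀ g : Γ, g ∉ H → ¬ p ∣ Nat.card ↥(H ⊓ H.map (MulAut.conj g).toMonoidHom)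

/-- `R` is `F`-essential: `R` is fully normalized, `F`-centric, and `Out_F(R)`
contains a strongly `p`-embedded subgroup. -/
def IsEssential (p : ℕ) (F : FusionSystem S) (R : Subgroup S) : Prop :=
  F.FullyNormalized R ∧ F.Centric R ∧
    ∃ H : Subgroup (OutF F R), IsStronglyPEmbedded p H

/-- The Burnside ring `B(F)` of a fusion system: the subring of `B(S)` of elements
whose marks agree on `F`-conjugate subgroups. -/
noncomputable def FusionSystem.burnside (F : FusionSystem S) : Subring (Subgroup S → ℤ) where
  carrier := {b | b ∈ burnsideRing S ∧ ∀ P Q : Subgroup S, F.SubConj P Q → b P = b Q}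
  zero_mem' := ⟨zero_mem _, fun _ _ _ => rfl⟩
  one_mem' := ⟨one_mem _, fun _ _ _ => rfl⟩
  add_mem' := fun ha hb => ⟨add_mem ha.1 hb.1, fun P Q h => by
    simp only [Pi.add_apply, ha.2 P Q h, hb.2 P Q h]⟩
  mul_mem' := fun ha hb => ⟨mul_mem ha.1 hb.1, fun P Q h => by
    simp only [Pi.mul_apply, ha.2 P Q h, hb.2 P Q h]⟩
  neg_mem' := fun ha => ⟨neg_mem ha.1, fun P Q h => by
    simp only [Pi.neg_apply, ha.2 P Q h]⟩

/-- The unit group `B(F)^×` of the Burnside ring of a fusion system, as a set. -/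
noncomputable def FusionSystem.burnsideUnits (F : FusionSystem S) : Set (Subgroup S → ℤ) :=
  {b | b ∈ F.burnside ∧ b * b = 1}

/-- `F`-conjugacy as an equivalence relation on the subgroups of `S`. -/
def fconjSetoid (F : FusionSystem S) : Setoid (Subgroup S) where
  r := F.SubConj
  iseqv := by
    constructor
    · intro P
      refine ⟨conjMap 1 P P (fun x hx => by simpa using hx), F.conj_mem _ _ _ _, ?_⟩
      intro y; exact ⟨y, by ext; simp [conjMap]⟩
    · rintro P Q ⟨f, hf, hsurj⟩
      have hbij : Function.Bijective ⇑f := ⟨F.inj hf, hsurj⟩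
      have he : (MulEquiv.ofBijective f hbij).toMonoidHom ∈ F.Hom P Q := by
        have : (MulEquiv.ofBijective f hbij).toMonoidHom = f := by ext x; rfl
        rwa [this]
      exact ⟨(MulEquiv.ofBijective f hbij).symm.toMonoidHom, F.isoinv_mem _ he,
        (MulEquiv.ofBijective f hbij).symm.surjective⟩
    · rintro P Q R ⟨f, hf, hfs⟩ ⟨g, hg, hgs⟩
      exact ⟨g.comp f, F.comp_mem hf hg, hgs.comp hfs⟩

open Classical in
/-- The unit `v_M ∈ B(S)^×` attached to a maximal subgroup `M < S`:
its mark at `P` is `-1` if `P ≤ M` and `+1` otherwise. -/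
noncomputable def vUnit (S : Type*) [Group S] (M : Subgroup S) : Subgroup S → ℤ :=
  fun P => if P ≤ M then -1 else 1

end BurnsideFusion

namespace BurnsideFusion

variable {G : Type*} [Group G]

/-- `S` is a Sylow `p`-subgroup of `G`. -/
def IsSylow (p : ℕ) (S : Subgroup G) : Prop :=
  IsPGroup p ↥S ∧ ¬ p ∣ S.index

/-- `K` is a Sylow `p`-subgroup of `H` (both subgroups of an ambient group `G`). -/
def IsSylowIn (p : ℕ) (H K : Subgroup G) : Prop :=
  K ≤ H ∧ IsPGroup p ↥K ∧ ¬ p ∣ (K.subgroupOf H).index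

/-- An element of the ghost ring of `S` has marks which agree on pairs of subgroups
of `S` that are conjugate by an element of `N ≤ G`.  For `N = ⊤` this is stability
for the Frobenius fusion system `F_S(G)`; for `N = N_G(S)` it is stability for
`F_S(N_G(S))`. -/
def frobStable (S N : Subgroup G) (b : Subgroup ↥S → ℤ) : Prop :=
  ∀ P Q : Subgroup ↥S,
    (∃ g ∈ N, (P.map S.subtype).map (MulAut.conj g).toMonoidHom = Q.map S.subtype) →
    b P = b Q

/-- The Burnside ring `B(F_S(N))` of the fusion system on `S` induced by a subgroup
`N` of `G` containing `S`, as a subset of `B(S)`. -/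
noncomputable def frobBurnside (S N : Subgroup G) : Set (Subgroup ↥S → ℤ) :=
  {b | b ∈ burnsideRing ↥S ∧ frobStable S N b}

/-- The unit group `B(F_S(N))^×`, as a set. -/
noncomputable def frobUnits (S N : Subgroup G) : Set (Subgroup ↥S → ℤ) :=
  {b | b ∈ frobBurnside S N ∧ b * b = 1}

/-- Restriction `B(N) → B(S)` for `S ≤ N ≤ G`, on marks. -/
def resMark₂ (S N : Subgroup G) (b : Subgroup ↥N → ℤ) : Subgroup ↥S → ℤ :=
  fun P => b ((P.map S.subtype).subgroupOf N)

/-- Tensor induction `B(Ten^G_S) : B(S)^× → B(G)^×`, on marks: the mark of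
`Ten^G_S b` at `H ≤ G` is the product over the double cosets `HgS` of the marks
`b_{(g⁻¹Hg ∩ S)}`. -/
noncomputable def tenInd (S : Subgroup G) (b : Subgroup ↥S → ℤ) : Subgroup G → ℤ :=
  fun H => ∏ᶠ c : DoubleCoset.Quotient (H : Set G) (S : Set G),
    b ((H.comap (MulAut.conj (Quotient.out c)).toMonoidHom).subgroupOf S)

/-- `Aut_G(S)`: the automorphisms of `S ≤ G` induced by conjugation by elements
of `G` (as a set). -/
def autGSet (S : Subgroup G) : Set (MulAut ↥S) :=
  {α | ∃ g : G, ∀ x : ↥S, ((α x : ↥S) : G) = g * (x : G) * g⁻¹}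

end BurnsideFusion

namespace BurnsideFusion

/-! ### Auxiliary lemmas for Statement 5 -/

section Aux5

variable {S : Type*} [Group S]

/-- Congruence of coset spaces under an automorphism. -/
noncomputable def quotCongr (α : S ≃* S) (K : Subgroup S) :
    S ⧸ K ≃ S ⧸ K.map α.toMonoidHom :=
  Quotient.congr α.toEquiv (by
    intro a b
    rw [QuotientGroup.leftRel_apply, QuotientGroup.leftRel_apply]
    have h : (α.toEquiv a)⁻¹ * α.toEquiv b = α.toMonoidHom (a⁻¹ * b) := by simp
    rw [h, Subgroup.mem_map_iff_mem (fun x y hxy => α.injective hxy)])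

lemma quotCongr_mk (α : S ≃* S) (K : Subgroup S) (s : S) :
    quotCongr α K (QuotientGroup.mk s) = QuotientGroup.mk (α s) := rfl

lemma smul_mk' (K : Subgroup S) (g s : S) :
    g • (QuotientGroup.mk s : S ⧸ K) = QuotientGroup.mk (g * s) := rfl

lemma quotCongr_smul (α : S ≃* S) (K : Subgroup S) (g : S) (x : S ⧸ K) :
    quotCongr α K (g • x) = α g • quotCongr α K x := by
  induction x using QuotientGroup.induction_on with
  | H s => rw [smul_mk', quotCongr_mk, quotCongr_mk, smul_mk', map_mul]

lemma markVector_map (α : MulAut S) (K Q : Subgroup S) :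
    markVector S K (Q.comap α.toMonoidHom) = markVector S (K.map α.toMonoidHom) Q := by
  unfold markVector
  congr 1
  refine Nat.card_congr (Equiv.subtypeEquiv (quotCongr (α : S ≃* S) K) fun x => ?_)
  constructor
  · intro hx h hh
    have h' : α.symm h ∈ Q.comap α.toMonoidHom := by
      simp only [Subgroup.mem_comap, MulEquiv.coe_toMonoidHom, MulEquiv.apply_symm_apply]
      exact hh
    calc h • quotCongr (α : S ≃* S) K x
        = α (α.symm h) • quotCongr (α : S ≃* S) K x := by rw [MulEquiv.apply_symm_apply]
      _ = quotCongr (α : S ≃* S) K (α.symm h • x) := (quotCongr_smul _ _ _ _).symm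
      _ = quotCongr (α : S ≃* S) K x := by rw [hx _ h']
  · intro hx h hh
    apply (quotCongr (α : S ≃* S) K).injective
    rw [quotCongr_smul]
    exact hx _ (by simpa [Subgroup.mem_comap] using hh)

lemma markVector_comap_conj (g : S) (K Q : Subgroup S) :
    markVector S K (Q.comap (MulAut.conj g).toMonoidHom) = markVector S K Q := by
  unfold markVector
  congr 1
  refine Nat.card_congr (Equiv.subtypeEquiv (MulAction.toPerm g : Equiv.Perm (S ⧸ K)) fun x => ?_)
  simp only [MulAction.toPerm_apply]
  constructor
  · intro hx q hq
    have hmem : g⁻¹ * q * g ∈ Q.comap (MulAut.conj g).toMonoidHom := by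
      simp only [Subgroup.mem_comap, MulAut.conj_apply, MulEquiv.coe_toMonoidHom]
      convert hq using 2
      group
    calc q • g • x = (q * g) • x := (mul_smul _ _ _).symm
      _ = (g * (g⁻¹ * q * g)) • x := by congr 1; group
      _ = g • ((g⁻¹ * q * g) • x) := mul_smul _ _ _
      _ = g • x := by rw [hx _ hmem]
  · intro hx h hh
    simp only [Subgroup.mem_comap, MulAut.conj_apply, MulEquiv.coe_toMonoidHom] at hh
    have key := hx _ hh
    have hcan : g • (h • x) = g • x := by
      calc g • h • x = (g * h) • x := (mul_smul _ _ _).symm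
        _ = ((g * h * g⁻¹) * g) • x := by congr 1; group
        _ = (g * h * g⁻¹) • (g • x) := mul_smul _ _ _
        _ = g • x := key
    exact smul_left_cancel g hcan

/-- `autAct f` as a ring homomorphism of the ghost ring. -/
def autActHom (f : S →* S) : (Subgroup S → ℤ) →+* (Subgroup S → ℤ) :=
  Pi.ringHom fun Q => Pi.evalRingHom (fun _ => ℤ) (Q.comap f)

lemma autActHom_apply (f : S →* S) (b : Subgroup S → ℤ) : autActHom f b = autAct f b := rfl

lemma autAct_autAct (α β : MulAut S) (b : Subgroup S → ℤ) :
    autAct α.toMonoidHom (autAct β.toMonoidHom b) = autAct (α * β).toMonoidHom b := by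
  funext Q
  show b ((Q.comap α.toMonoidHom).comap β.toMonoidHom) = b (Q.comap (α * β).toMonoidHom)
  rw [Subgroup.comap_comap]
  congr 1

lemma autAct_mem (α : MulAut S) {b : Subgroup S → ℤ} (hb : b ∈ burnsideRing S) :
    autAct α.toMonoidHom b ∈ burnsideRing S := by
  induction hb using Subring.closure_induction with
  | mem x hx =>
    obtain ⟨K, rfl⟩ := hx
    have h : autAct α.toMonoidHom (markVector S K) = markVector S (K.map α.toMonoidHom) :=
      funext fun Q => markVector_map α K Q
    rw [h]
    exact Subring.subset_closure ⟨_, rfl⟩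
  | zero => exact zero_mem _
  | one => exact one_mem _
  | add x y _ _ ihx ihy => exact add_mem ihx ihy
  | neg x _ ihx => exact neg_mem ihx
  | mul x y _ _ ihx ihy => exact mul_mem ihx ihy

lemma autAct_conj_eq (g : S) {b : Subgroup S → ℤ} (hb : b ∈ burnsideRing S) :
    autAct (MulAut.conj g).toMonoidHom b = b := by
  induction hb using Subring.closure_induction with
  | mem x hx =>
    obtain ⟨K, rfl⟩ := hx
    exact funext fun Q => markVector_comap_conj g K Q
  | zero => rfl
  | one => rfl
  | add x y _ _ ihx ihy =>
    have h : autAct (MulAut.conj g).toMonoidHom (x + y)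
        = autAct (MulAut.conj g).toMonoidHom x + autAct (MulAut.conj g).toMonoidHom y := rfl
    rw [h, ihx, ihy]
  | neg x _ ihx =>
    have h : autAct (MulAut.conj g).toMonoidHom (-x)
        = -autAct (MulAut.conj g).toMonoidHom x := rfl
    rw [h, ihx]
  | mul x y _ _ ihx ihy =>
    have h : autAct (MulAut.conj g).toMonoidHom (x * y)
        = autAct (MulAut.conj g).toMonoidHom x * autAct (MulAut.conj g).toMonoidHom y := rfl
    rw [h, ihx, ihy]

lemma autAct_mul_conj (α : MulAut S) (g : S) {b : Subgroup S → ℤ} (hb : b ∈ burnsideRing S) :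
    autAct (α * MulAut.conj g).toMonoidHom b = autAct α.toMonoidHom b := by
  rw [← autAct_autAct, autAct_conj_eq g hb]

instance finiteMulAut [Finite S] : Finite (MulAut S) :=
  Finite.of_injective (fun α : MulAut S => (α : S → S))
    (fun a b h => by ext x; exact congrFun h x)

end Aux5

section Aux6

variable {S : Type*} [Group S]

/-- Transfer of automorphism groups along `topEquiv`. -/
noncomputable def PhiTop : MulAut ↥(⊤ : Subgroup S) ≃* MulAut S :=
  MulAut.congr Subgroup.topEquiv

lemma topRestrict_PhiTop (α : MulAut ↥(⊤ : Subgroup S)) : topRestrict (PhiTop α) = α := by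
  ext x
  simp only [PhiTop, topRestrict, MulAut.congr, MulEquiv.trans_apply, MulEquiv.coe_mk,
    Equiv.coe_fn_mk, MulEquiv.symm_apply_apply]

lemma PhiTop_mem_AutFS (F : FusionSystem S) (α : MulAut ↥(⊤ : Subgroup S)) :
    PhiTop α ∈ F.AutFS ↔ α ∈ F.AutF ⊤ := by
  show (topRestrict (PhiTop α)).toMonoidHom ∈ F.Hom ⊤ ⊤ ↔ α.toMonoidHom ∈ F.Hom ⊤ ⊤
  rw [topRestrict_PhiTop]

lemma mem_normalizer_top (g : S) : g ∈ Subgroup.normalizer ((⊤ : Subgroup S) : Set S) := by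
  rw [Subgroup.mem_normalizer_iff]
  intro h
  simp

lemma PhiTop_conjAut (s : ↥(Subgroup.normalizer ((⊤ : Subgroup S) : Set S))) :
    PhiTop (conjAut ⊤ s) = MulAut.conj (s : S) := by
  ext x
  simp [PhiTop, MulAut.congr, conjAut, MulAut.conj_apply]

lemma PhiTop_mem_conjRange (α : MulAut ↥(⊤ : Subgroup S)) :
    PhiTop α ∈ (MulAut.conj : S →* MulAut S).range ↔ α ∈ AutS (⊤ : Subgroup S) := by
  constructor
  · rintro ⟨g, hg⟩
    refine ⟨⟨g, mem_normalizer_top g⟩, ?_⟩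
    apply PhiTop.injective
    rw [show conjAutHom (⊤ : Subgroup S) ⟨g, mem_normalizer_top g⟩
        = conjAut ⊤ ⟨g, mem_normalizer_top g⟩ from rfl, PhiTop_conjAut]
    exact hg
  · rintro ⟨s, rfl⟩
    exact ⟨(s : S), (PhiTop_conjAut s).symm⟩

/-- The equivalence `Aut_F(⊤) ≃ Aut_F(S)`. -/
noncomputable def eAutF (F : FusionSystem S) : ↥(F.AutF (⊤ : Subgroup S)) ≃ ↥F.AutFS :=
  (PhiTop (S := S)).toEquiv.subtypeEquiv fun α => (PhiTop_mem_AutFS F α).symm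

/-- The equivalence of the two coset spaces. -/
noncomputable def eQuot (F : FusionSystem S) :
    (↥(F.AutF (⊤ : Subgroup S)) ⧸ (AutS (⊤ : Subgroup S)).subgroupOf (F.AutF ⊤)) ≃
      (↥F.AutFS ⧸ ((MulAut.conj : S →* MulAut S).range.subgroupOf F.AutFS)) :=
  Quotient.congr (eAutF F) (by
    intro a b
    rw [QuotientGroup.leftRel_apply, QuotientGroup.leftRel_apply,
      Subgroup.mem_subgroupOf, Subgroup.mem_subgroupOf]
    have key : (((eAutF F a)⁻¹ * eAutF F b : ↥F.AutFS) : MulAut S)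
        = PhiTop (((a⁻¹ * b : ↥(F.AutF (⊤ : Subgroup S))) : MulAut ↥(⊤ : Subgroup S))) :=
      calc (((eAutF F a)⁻¹ * eAutF F b : ↥F.AutFS) : MulAut S)
          = ((PhiTop (↑a : MulAut ↥(⊤ : Subgroup S)))⁻¹ * PhiTop (↑b : MulAut ↥(⊤ : Subgroup S))
              : MulAut S) := rfl
        _ = PhiTop ((↑a : MulAut ↥(⊤ : Subgroup S))⁻¹ * (↑b : MulAut ↥(⊤ : Subgroup S))) := by
              rw [map_mul, map_inv]
        _ = PhiTop (((a⁻¹ * b : ↥(F.AutF (⊤ : Subgroup S))) : MulAut ↥(⊤ : Subgroup S))) := rfl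
    rw [key, PhiTop_mem_conjRange])

lemma card_quot_odd [Finite S] (F : FusionSystem S) (hF : F.IsSaturated 2) :
    ¬ 2 ∣ Nat.card
      (↥F.AutFS ⧸ ((MulAut.conj : S →* MulAut S).range.subgroupOf F.AutFS)) := by
  obtain ⟨Q, hconj, hfa, -⟩ := hF ⊤
  obtain ⟨f, hfF, hfs⟩ := hconj
  have hcard : Nat.card ↥Q = Nat.card S := by
    rw [← Nat.card_congr (Equiv.ofBijective f ⟨F.inj hfF, hfs⟩), Subgroup.card_top]
  have hQ : Q = ⊤ := Subgroup.eq_top_of_card_eq _ hcard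
  subst hQ
  obtain ⟨-, -, hidx⟩ := hfa
  intro hdvd
  apply hidx
  rwa [Subgroup.index_eq_card, Nat.card_congr (eQuot F)]

end Aux6

section Aux7

variable {S : Type*} [Group S]

lemma autAct_out_mk (F : FusionSystem S) {b : Subgroup S → ℤ} (hb : b ∈ burnsideRing S)
    (x : ↥F.AutFS) :
    autAct ((Quotient.out (QuotientGroup.mk x :
        ↥F.AutFS ⧸ ((MulAut.conj : S →* MulAut S).range.subgroupOf F.AutFS)) :
        ↥F.AutFS) : MulAut S).toMonoidHom b
      = autAct ((x : MulAut S)).toMonoidHom b := by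
  set y := Quotient.out (QuotientGroup.mk x :
      ↥F.AutFS ⧸ ((MulAut.conj : S →* MulAut S).range.subgroupOf F.AutFS)) with hy
  have h1 : (QuotientGroup.mk y :
      ↥F.AutFS ⧸ ((MulAut.conj : S →* MulAut S).range.subgroupOf F.AutFS))
      = QuotientGroup.mk x := QuotientGroup.out_eq' _
  have h2 : x⁻¹ * y ∈ (MulAut.conj : S →* MulAut S).range.subgroupOf F.AutFS :=
    (QuotientGroup.eq).mp h1.symm
  rw [Subgroup.mem_subgroupOf] at h2
  obtain ⟨g, hg⟩ := h2
  have hyx : (y : MulAut S) = (x : MulAut S) * MulAut.conj g := by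
    rw [hg]
    show (y : MulAut S) = ↑x * ((x⁻¹ * y : ↥F.AutFS) : MulAut S)
    rw [show ((x⁻¹ * y : ↥F.AutFS) : MulAut S) = (↑x)⁻¹ * (y : MulAut S) from rfl]
    group
  rw [hyx, autAct_mul_conj _ _ hb]

lemma relTrace_mem [Finite S] (F : FusionSystem S) {b : Subgroup S → ℤ}
    (hb : b ∈ burnsideRing S) :
    relTrace F.AutFS (MulAut.conj : S →* MulAut S).range b ∈ burnsideRing S := by
  haveI := Fintype.ofFinite
    (↥F.AutFS ⧸ ((MulAut.conj : S →* MulAut S).range.subgroupOf F.AutFS))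
  rw [relTrace, finprod_eq_prod_of_fintype]
  exact prod_mem fun c _ => autAct_mem _ hb

lemma relTrace_mul [Finite S] (F : FusionSystem S) (a b : Subgroup S → ℤ) :
    relTrace F.AutFS (MulAut.conj : S →* MulAut S).range (a * b)
      = relTrace F.AutFS (MulAut.conj : S →* MulAut S).range a *
        relTrace F.AutFS (MulAut.conj : S →* MulAut S).range b := by
  haveI := Fintype.ofFinite
    (↥F.AutFS ⧸ ((MulAut.conj : S →* MulAut S).range.subgroupOf F.AutFS))
  rw [relTrace, relTrace, relTrace, finprod_eq_prod_of_fintype, finprod_eq_prod_of_fintype,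
    finprod_eq_prod_of_fintype, ← Finset.prod_mul_distrib]
  rfl

lemma relTrace_one [Finite S] (F : FusionSystem S) :
    relTrace F.AutFS (MulAut.conj : S →* MulAut S).range (1 : Subgroup S → ℤ) = 1 := by
  haveI := Fintype.ofFinite
    (↥F.AutFS ⧸ ((MulAut.conj : S →* MulAut S).range.subgroupOf F.AutFS))
  rw [relTrace, finprod_eq_prod_of_fintype]
  exact Finset.prod_const_one

lemma relTrace_invariant [Finite S] (F : FusionSystem S) {b : Subgroup S → ℤ}
    (hb : b ∈ burnsideRing S) {β : MulAut S} (hβ : β ∈ F.AutFS) :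
    autAct β.toMonoidHom (relTrace F.AutFS (MulAut.conj : S →* MulAut S).range b)
      = relTrace F.AutFS (MulAut.conj : S →* MulAut S).range b := by
  haveI := Fintype.ofFinite
    (↥F.AutFS ⧸ ((MulAut.conj : S →* MulAut S).range.subgroupOf F.AutFS))
  rw [relTrace, finprod_eq_prod_of_fintype, ← autActHom_apply, map_prod]
  have hterm : ∀ c : ↥F.AutFS ⧸ ((MulAut.conj : S →* MulAut S).range.subgroupOf F.AutFS),
      autActHom β.toMonoidHom
        (autAct ((Quotient.out c : ↥F.AutFS) : MulAut S).toMonoidHom b)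
      = autAct ((Quotient.out (((⟨β, hβ⟩ : ↥F.AutFS) • c)) : ↥F.AutFS)
          : MulAut S).toMonoidHom b := by
    intro c
    have hc : ((⟨β, hβ⟩ : ↥F.AutFS) • c) = QuotientGroup.mk ((⟨β, hβ⟩ : ↥F.AutFS) * Quotient.out c) := by
      conv_lhs => rw [← QuotientGroup.out_eq' c]
      rfl
    rw [autActHom_apply, autAct_autAct, hc, autAct_out_mk F hb]
    rfl
  rw [Finset.prod_congr rfl (fun c _ => hterm c)]
  exact Fintype.prod_bijective (fun c => (⟨β, hβ⟩ : ↥F.AutFS) • c) (MulAction.bijective _)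
    _ _ (fun c => rfl)

lemma relTrace_of_fixed [Finite S] (F : FusionSystem S) {b : Subgroup S → ℤ}
    (hfix : ∀ α : MulAut S, α ∈ F.AutFS → autAct α.toMonoidHom b = b) :
    relTrace F.AutFS (MulAut.conj : S →* MulAut S).range b
      = b ^ Nat.card
          (↥F.AutFS ⧸ ((MulAut.conj : S →* MulAut S).range.subgroupOf F.AutFS)) := by
  haveI := Fintype.ofFinite
    (↥F.AutFS ⧸ ((MulAut.conj : S →* MulAut S).range.subgroupOf F.AutFS))
  rw [relTrace, finprod_eq_prod_of_fintype,
    Finset.prod_congr rfl (fun c _ => hfix _ (SetLike.coe_mem _)),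
    Finset.prod_const, Finset.card_univ, Nat.card_eq_fintype_card]

lemma pow_odd_eq {M : Type*} [CommMonoid M] {b : M} (h2 : b * b = 1) {n : ℕ}
    (hodd : ¬ 2 ∣ n) : b ^ n = b := by
  have hm : n % 2 = 1 := Nat.two_dvd_ne_zero.mp hodd
  have hk : n = 2 * (n / 2) + 1 := by omega
  rw [hk, pow_succ, pow_mul, show b ^ 2 = 1 by rw [sq, h2], one_pow, one_mul]

end Aux7

section Aux8

variable {S : Type*} [Group S]

lemma subConj_comap (F : FusionSystem S) {α : MulAut S} (hα : α ∈ F.AutFS)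
    (Q : Subgroup S) : F.SubConj (Q.comap α.toMonoidHom) Q := by
  set P := Q.comap α.toMonoidHom with hP
  have hincl : ∀ x ∈ P, (1 : S) * x * (1 : S)⁻¹ ∈ (⊤ : Subgroup S) := fun x _ => trivial
  have hι : conjMap (1 : S) P ⊤ hincl ∈ F.Hom P ⊤ := F.conj_mem _ _ _ _
  have hf : ((topRestrict α).toMonoidHom.comp (conjMap (1 : S) P ⊤ hincl)) ∈ F.Hom P ⊤ :=
    F.comp_mem hι hα
  obtain ⟨R, hRle, e, heF, hecoe⟩ := F.factor_mem hf
  have hval : ∀ x : ↥P, ((e x : ↥R) : S) = α (x : S) := by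
    intro x
    rw [hecoe x]
    show ((topRestrict α (conjMap (1 : S) P ⊤ hincl x) : ↥(⊤ : Subgroup S)) : S) = α ↑x
    simp [topRestrict, conjMap]
  have hR : R = Q := by
    ext y
    constructor
    · intro hy
      obtain ⟨x, hx⟩ := e.surjective ⟨y, hy⟩
      have hxy : y = α ↑x := by rw [← hval x, hx]
      rw [hxy]
      exact x.2
    · intro hy
      have hmem : α.symm y ∈ P := by
        show α.toMonoidHom (α.symm y) ∈ Q
        simpa using hy
      have hey : ((e ⟨α.symm y, hmem⟩ : ↥R) : S) = y := by
        rw [hval]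
        exact α.apply_symm_apply y
      rw [← hey]
      exact (e _).2
  subst hR
  exact ⟨e.toMonoidHom, heF, e.surjective⟩

end Aux8

theorem statement5 {S : Type*} [Group S] [Finite S] (hS : IsPGroup 2 S)
    (F : FusionSystem S) (hF : F.IsSaturated 2) :
    (∀ u ∈ burnsideUnits S,
      relTrace F.AutFS (MulAut.conj : S →* MulAut S).range u ∈ fixedUnits S ↑F.AutFS) ∧
    (∃ sec : (Subgroup S → ℤ) → (Subgroup S → ℤ),
      (∀ b ∈ fixedUnits S ↑F.AutFS,
        sec b ∈ burnsideUnits S ∧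
          relTrace F.AutFS (MulAut.conj : S →* MulAut S).range (sec b) = b) ∧
      (∀ b ∈ fixedUnits S ↑F.AutFS, ∀ c ∈ fixedUnits S ↑F.AutFS,
        sec (b * c) = sec b * sec c)) ∧
    (∀ u ∈ burnsideUnits S,
      ∃! q : (Subgroup S → ℤ) × (Subgroup S → ℤ),
        q.1 ∈ burnsideUnits S ∧
          relTrace F.AutFS (MulAut.conj : S →* MulAut S).range q.1 = 1 ∧
          q.2 ∈ fixedUnits S ↑F.AutFS ∧ u = q.1 * q.2) ∧
    F.burnsideUnits ⊆ fixedUnits S ↑F.AutFS := by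
  classical
  have hodd : ¬ 2 ∣ Nat.card
      (↥F.AutFS ⧸ ((MulAut.conj : S →* MulAut S).range.subgroupOf F.AutFS)) :=
    card_quot_odd F hF
  have htrfix : ∀ b ∈ fixedUnits S ↑F.AutFS,
      relTrace F.AutFS (MulAut.conj : S →* MulAut S).range b = b := by
    intro b hb
    rw [relTrace_of_fixed F (fun α hα => hb.2 α hα)]
    exact pow_odd_eq hb.1.2 hodd
  have htru : ∀ u ∈ burnsideUnits S,
      relTrace F.AutFS (MulAut.conj : S →* MulAut S).range u ∈ fixedUnits S ↑F.AutFS := by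
    intro u hu
    refine ⟨⟨relTrace_mem F hu.1, ?_⟩, fun α hα => relTrace_invariant F hu.1 hα⟩
    rw [← relTrace_mul, hu.2, relTrace_one]
  refine ⟨htru, ⟨fun b => b, fun b hb => ⟨hb.1, htrfix b hb⟩, fun b _ c _ => rfl⟩, ?_, ?_⟩
  · intro u hu
    have ht := htru u hu
    set t := relTrace F.AutFS (MulAut.conj : S →* MulAut S).range u with htdef
    have htt : t * t = 1 := ht.1.2
    refine ⟨(u * t, t), ⟨⟨mul_mem hu.1 ht.1.1, by
        rw [mul_mul_mul_comm, hu.2, htt, one_mul]⟩, ?_, ht, ?_⟩, ?_⟩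
    · rw [relTrace_mul, ← htdef, htrfix t ht, htt]
    · rw [mul_assoc, htt, mul_one]
    · rintro ⟨a, b⟩ ⟨ha, hta, hbfix, hab⟩
      have hbb : b * b = 1 := hbfix.1.2
      have hbt : b = t := by
        rw [htdef, hab, relTrace_mul, hta, one_mul, htrfix b hbfix]
      have hat : a = u * t := by
        rw [← hbt, hab, mul_assoc, hbb, mul_one]
      simp only [Prod.mk.injEq]
      exact ⟨hat, hbt⟩
  · intro b hb
    have hb1 : b ∈ burnsideRing S ∧ ∀ P Q : Subgroup S, F.SubConj P Q → b P = b Q := hb.1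
    exact ⟨⟨hb1.1, hb.2⟩, fun α hα => funext fun Q => hb1.2 _ _ (subConj_comap F hα Q)⟩

end BurnsideFusion
end

section
/- Let F be a saturated fusion system on a finite 2-group S, and let M < S be a maximal subgroup. Then v_M ∈ B(F)^× if and only if M is strongly closed in F, i.e. for every x ∈ M, every F-conjugate of x lies in M. -/
namespace BurnsideFusion

section Aux

variable {S : Type*} [Group S]

lemma mem_fburnside_iff (F : FusionSystem S) {b : Subgroup S → ℤ} :
    b ∈ F.burnside ↔ b ∈ burnsideRing S ∧ ∀ P Q : Subgroup S, F.SubConj P Q → b P = b Q :=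
  Iff.rfl

lemma coatom_normal [Finite S] (hS : IsPGroup 2 S) {M : Subgroup S} (hM : IsCoatom M) :
    M.Normal := by
  haveI := Fact.mk Nat.prime_two
  haveI : Group.IsNilpotent S := hS.isNilpotent
  exact Subgroup.NormalizerCondition.normal_of_coatom M normalizerCondition_of_isNilpotent hM

lemma coatom_index_two [Finite S] (hS : IsPGroup 2 S) {M : Subgroup S} (hM : IsCoatom M) :
    M.index = 2 := by
  haveI := Fact.mk Nat.prime_two
  haveI hN : M.Normal := coatom_normal hS hM
  obtain ⟨n, hn⟩ := hS.exists_card_eq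
  have hdvd : M.index ∣ 2 ^ n := hn ▸ M.index_dvd_card
  obtain ⟨k, hk, hke⟩ := (Nat.dvd_prime_pow Nat.prime_two).mp hdvd
  have hk0 : k ≠ 0 := by
    rintro rfl
    exact hM.1 (Subgroup.index_eq_one.mp (by simpa using hke))
  have h2 : 2 ∣ Nat.card (S ⧸ M) := by
    rw [← M.index_eq_card, hke]
    exact dvd_pow_self 2 hk0
  obtain ⟨g, hg⟩ := exists_prime_orderOf_dvd_card' (G := S ⧸ M) 2 h2
  obtain ⟨x, rfl⟩ := QuotientGroup.mk'_surjective M g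
  set K := (Subgroup.zpowers (QuotientGroup.mk' M x)).comap (QuotientGroup.mk' M) with hK
  have hxM : x ∉ M := by
    intro hxM
    have h1 : QuotientGroup.mk' M x = 1 := (QuotientGroup.eq_one_iff x).mpr hxM
    rw [h1, orderOf_one] at hg
    norm_num at hg
  have hMK : M < K := by
    refine lt_of_le_of_ne ?_ ?_
    · intro m hm
      have h1 : QuotientGroup.mk' M m = 1 := (QuotientGroup.eq_one_iff m).mpr hm
      exact Subgroup.mem_comap.mpr (h1 ▸ Subgroup.one_mem _)
    · intro heq
      exact hxM (heq ▸ Subgroup.mem_comap.mpr (Subgroup.mem_zpowers _))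
  have hKtop : K = ⊤ := hM.2 K hMK
  have hz : Subgroup.zpowers (QuotientGroup.mk' M x) = ⊤ := by
    have hmc := Subgroup.map_comap_eq_self_of_surjective (QuotientGroup.mk'_surjective M)
      (Subgroup.zpowers (QuotientGroup.mk' M x))
    rw [← hK, hKtop, Subgroup.map_top_of_surjective _ (QuotientGroup.mk'_surjective M)] at hmc
    exact hmc.symm
  rw [M.index_eq_card, ← Subgroup.card_top (G := S ⧸ M), ← hz, Nat.card_zpowers, hg]

open Classical in
lemma markVector_coatom [Finite S] (hS : IsPGroup 2 S) {M : Subgroup S} (hM : IsCoatom M)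
    (P : Subgroup S) : markVector S M P = if P ≤ M then 2 else 0 := by
  haveI hN : M.Normal := coatom_normal hS hM
  have key : ∀ h : S, ∀ x : S ⧸ M, (h • x = x ↔ h ∈ M) := by
    intro h x
    induction x using QuotientGroup.induction_on with
    | H z =>
      rw [MulAction.Quotient.smul_mk, QuotientGroup.eq]
      have hrw : (h • z)⁻¹ * z = z⁻¹ * h⁻¹ * z := by
        simp only [smul_eq_mul]; group
      rw [hrw]
      constructor
      · intro hmem
        have h2 : z * (z⁻¹ * h⁻¹ * z) * z⁻¹ ∈ M := hN.conj_mem _ hmem z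
        have h3 : z * (z⁻¹ * h⁻¹ * z) * z⁻¹ = h⁻¹ := by group
        rw [h3] at h2
        simpa using h2
      · intro hmem
        have h2 : z⁻¹ * h⁻¹ * z⁻¹⁻¹ ∈ M := hN.conj_mem _ (M.inv_mem hmem) z⁻¹
        simpa using h2
  by_cases hPM : P ≤ M
  · rw [if_pos hPM]
    have hall : ∀ x : S ⧸ M, ∀ h : S, h ∈ P → h • x = x :=
      fun x h hh => (key h x).mpr (hPM hh)
    have e : {x : S ⧸ M // ∀ h : S, h ∈ P → h • x = x} ≃ (S ⧸ M) :=
      Equiv.subtypeUnivEquiv (fun x => hall x)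
    have hcard : Nat.card {x : S ⧸ M // ∀ h : S, h ∈ P → h • x = x} = 2 := by
      rw [Nat.card_congr e, ← M.index_eq_card, coatom_index_two hS hM]
    simp only [markVector, hcard]
    norm_num
  · rw [if_neg hPM]
    obtain ⟨h, hhP, hhM⟩ := SetLike.not_le_iff_exists.mp hPM
    haveI : IsEmpty {x : S ⧸ M // ∀ h : S, h ∈ P → h • x = x} :=
      ⟨fun ⟨x, hx⟩ => hhM ((key h x).mp (hx h hhP))⟩
    simp only [markVector, Nat.card_of_isEmpty]
    norm_num

lemma vUnit_mem_burnsideRing [Finite S] (hS : IsPGroup 2 S) {M : Subgroup S}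
    (hM : IsCoatom M) : vUnit S M ∈ burnsideRing S := by
  classical
  have hv : vUnit S M = 1 - markVector S M := by
    funext P
    simp only [vUnit, Pi.sub_apply, Pi.one_apply, markVector_coatom hS hM P]
    split_ifs <;> norm_num
  rw [hv]
  exact sub_mem (one_mem _) (Subring.subset_closure ⟨M, rfl⟩)

lemma elemConj_of_hom (F : FusionSystem S) {P Q : Subgroup S} {f : ↥P →* ↥Q}
    (hf : f ∈ F.Hom P Q) (w : ↥P) : F.ElemConj (w : S) ((f w : ↥Q) : S) := by
  have hzle : Subgroup.zpowers (w : S) ≤ P := Subgroup.zpowers_le.mpr w.2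
  have h1 : ∀ z ∈ Subgroup.zpowers (w : S), (1 : S) * z * (1 : S)⁻¹ ∈ P := by
    intro z hz; simpa using hzle hz
  have hi := F.conj_mem 1 _ _ h1
  have hg := F.comp_mem hi hf
  obtain ⟨R, hRQ, e, he, hcoe⟩ := F.factor_mem hg
  set x0 : ↥(Subgroup.zpowers (w : S)) := ⟨(w : S), Subgroup.mem_zpowers _⟩ with hx0
  have hiw : conjMap (1 : S) (Subgroup.zpowers (w : S)) P h1 x0 = w := by
    ext; simp [conjMap, hx0]
  have hex : ((e x0 : ↥R) : S) = ((f w : ↥Q) : S) := by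
    rw [hcoe x0]
    show ((f (conjMap (1 : S) (Subgroup.zpowers (w : S)) P h1 x0) : ↥Q) : S) = _
    rw [hiw]
  have hyR : ((f w : ↥Q) : S) ∈ R := hex ▸ (e x0).2
  have hR : R = Subgroup.zpowers ((f w : ↥Q) : S) := by
    refine le_antisymm ?_ (Subgroup.zpowers_le.mpr hyR)
    intro r hr
    obtain ⟨z, hz⟩ := e.surjective ⟨r, hr⟩
    obtain ⟨k, hk⟩ := Subgroup.mem_zpowers_iff.mp z.2
    have hzx : z = x0 ^ k := by
      ext
      rw [← hk]
      simp [hx0]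
    have hr' : r = ((f w : ↥Q) : S) ^ k := by
      have hcz : ((e z : ↥R) : S) = r := by rw [hz]
      rw [hzx, map_zpow] at hcz
      rw [← hcz, SubgroupClass.coe_zpow, hex]
    rw [hr']
    exact Subgroup.mem_zpowers_iff.mpr ⟨k, rfl⟩
  subst hR
  exact ⟨e.toMonoidHom, he, Subtype.ext hex⟩

end Aux

theorem statement13 {S : Type*} [Group S] [Finite S] (hS : IsPGroup 2 S)
    (F : FusionSystem S) (hF : F.IsSaturated 2) (M : Subgroup S) (hM : IsCoatom M) :
    vUnit S M ∈ F.burnsideUnits ↔ F.StronglyClosed M := by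
  constructor
  · intro hmem
    obtain ⟨-, hstab⟩ := (mem_fburnside_iff F).mp hmem.1
    intro x hx y hconj
    obtain ⟨f, hf, hfx⟩ := hconj
    have hsurj : Function.Surjective ⇑f := by
      rintro ⟨z, hz⟩
      obtain ⟨k, hk⟩ := Subgroup.mem_zpowers_iff.mp hz
      refine ⟨⟨x, Subgroup.mem_zpowers x⟩ ^ k, ?_⟩
      ext
      rw [map_zpow, hfx, SubgroupClass.coe_zpow]
      exact hk
    have heq := hstab _ _ ⟨f, hf, hsurj⟩
    simp only [vUnit] at heq
    rw [if_pos (Subgroup.zpowers_le.mpr hx)] at heq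
    by_contra hy
    rw [if_neg (fun hle => hy (hle (Subgroup.mem_zpowers y)))] at heq
    norm_num at heq
  · intro hSC
    have key : ∀ P Q : Subgroup S, F.SubConj P Q → P ≤ M → Q ≤ M := by
      rintro P Q ⟨f, hf, hs⟩ hPM z hz
      obtain ⟨w, hw⟩ := hs ⟨z, hz⟩
      have h := elemConj_of_hom F hf w
      rw [hw] at h
      exact hSC (↑w) (hPM w.2) z h
    refine ⟨(mem_fburnside_iff F).mpr ⟨vUnit_mem_burnsideRing hS hM, ?_⟩, ?_⟩
    · classical
      intro P Q hPQ
      have h2 := key Q P ((fconjSetoid F).iseqv.symm hPQ)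
      simp only [vUnit]
      exact if_congr ⟨key P Q hPQ, h2⟩ rfl rfl
    · funext P
      simp only [Pi.mul_apply, Pi.one_apply, vUnit]
      split_ifs <;> norm_num

end BurnsideFusion
end

section
/- Let F be a saturated fusion system on a finite 2-group S. If v_M ∈ B(F)^× for all maximal subgroups M < S, then the Frattini subgroup Φ(S) is strongly closed in F; if additionally Φ(S) is abelian, then Φ(S) is normal in F. -/
namespace BurnsideFusion

section Statement15Aux

open Subgroup

variable {S : Type*} [Group S]

private lemma bf_coatom_comap (e : S ≃* S) {M : Subgroup S} (h : IsCoatom M) :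
    IsCoatom (M.comap e.toMonoidHom) := by
  rw [MulEquiv.toMonoidHom_eq_coe]
  exact (Subgroup.isCoatom_comap e).mpr h

private lemma bf_frat_normal (S : Type*) [Group S] :
    (sInf {M : Subgroup S | IsCoatom M}).Normal := by
  constructor
  intro n hn g
  rw [Subgroup.mem_sInf] at hn ⊢
  intro M hM
  have h2 : IsCoatom (M.comap (MulAut.conj g).toMonoidHom) := bf_coatom_comap _ hM
  have h3 := hn _ h2
  simpa [Subgroup.mem_comap] using h3

variable [Finite S]

private lemma bf_coatom_normal (hS : IsPGroup 2 S) {M : Subgroup S} (h : IsCoatom M) :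
    M.Normal := by
  haveI : Fact (Nat.Prime 2) := ⟨Nat.prime_two⟩
  haveI := hS.isNilpotent
  exact Subgroup.NormalizerCondition.normal_of_coatom M
    normalizerCondition_of_isNilpotent h

private lemma bf_odd_pow_mem (hS : IsPGroup 2 S) {M : Subgroup S} {x : S} {o : ℤ}
    (ho : Odd o) (hxo : x ^ o ∈ M) : x ∈ M := by
  haveI : Fact (Nat.Prime 2) := ⟨Nat.prime_two⟩
  obtain ⟨e, he⟩ := hS.exists_card_eq
  have h0 : x ^ ((2:ℕ) ^ e) = 1 := by rw [← he]; exact pow_card_eq_one'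
  have h1 : x ^ ((2:ℤ) ^ e) = 1 := by
    have h2 : ((2:ℤ) ^ e) = ((2 ^ e : ℕ) : ℤ) := by push_cast; ring
    rw [h2, zpow_natCast, h0]
  have hco : IsCoprime o ((2 : ℤ) ^ e) := by
    obtain ⟨k, hk⟩ := ho
    exact (IsCoprime.pow_right (⟨1, -k, by omega⟩ : IsCoprime o 2))
  obtain ⟨a, b, hab⟩ := hco
  have hx1 : x = (x ^ o) ^ a * (x ^ ((2:ℤ) ^ e)) ^ b := by
    rw [← zpow_mul, ← zpow_mul, ← zpow_add, mul_comm o a, mul_comm _ b, hab, zpow_one]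
  rw [hx1, h1, one_zpow, mul_one]
  exact Subgroup.zpow_mem M hxo a

private lemma bf_coatom_sq (hS : IsPGroup 2 S) {M : Subgroup S} (h : IsCoatom M)
    {x : S} (hx : x ∉ M) : x * x ∈ M := by
  haveI hMn := bf_coatom_normal hS h
  have hsq2 : x * x = x ^ (2:ℤ) := (zpow_two x).symm
  rcases (le_sup_left : M ≤ M ⊔ Subgroup.zpowers (x * x)).lt_or_eq with hlt | heq
  · exfalso
    have htop := h.2 _ hlt
    have hxm : x ∈ M ⊔ Subgroup.zpowers (x * x) := htop ▸ Subgroup.mem_top x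
    rw [← SetLike.mem_coe, Subgroup.normal_mul] at hxm
    obtain ⟨m, hm, z, hz, hmz⟩ := hxm
    have hmz' : m * z = x := hmz
    obtain ⟨k, hk⟩ := Subgroup.mem_zpowers_iff.mp hz
    have hxx : (x * x) ^ k = x ^ (2 * k) := by rw [hsq2, ← zpow_mul]
    have hodd : x ^ (1 - 2 * k) ∈ M := by
      have hveq : x ^ (1 - 2*k) = m := by
        have hx' : x = m * x ^ (2 * k) := by rw [← hxx, hk, hmz']
        have h6 : x ^ (1 - 2*k) = x * x ^ (-(2*k)) := by
          rw [sub_eq_add_neg, zpow_add, zpow_one]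
        calc x ^ (1 - 2*k) = x * x ^ (-(2*k)) := h6
          _ = (m * x ^ (2*k)) * x ^ (-(2*k)) := by rw [← hx']
          _ = m := by rw [mul_assoc, ← zpow_add]; simp
      rw [hveq]; exact hm
    exact hx (bf_odd_pow_mem hS ⟨-k, by ring⟩ hodd)
  · have hle : Subgroup.zpowers (x * x) ≤ M := le_sup_right.trans heq.symm.le
    exact hle (Subgroup.mem_zpowers _)

private lemma bf_coatom_diff (hS : IsPGroup 2 S) {M : Subgroup S} (h : IsCoatom M)
    {x y : S} (hx : x ∉ M) (hy : y ∉ M) : x⁻¹ * y ∈ M := by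
  haveI hMn := bf_coatom_normal hS h
  have hsq := bf_coatom_sq hS h hx
  have hsq2 : x * x = x ^ (2:ℤ) := (zpow_two x).symm
  have htop : M ⊔ Subgroup.zpowers x = ⊤ := by
    rcases (le_sup_left : M ≤ M ⊔ Subgroup.zpowers x).lt_or_eq with hlt | heq
    · exact h.2 _ hlt
    · exact absurd (le_sup_right.trans heq.symm.le (Subgroup.mem_zpowers x)) hx
  have hym : y ∈ M ⊔ Subgroup.zpowers x := htop ▸ Subgroup.mem_top y
  rw [← SetLike.mem_coe, Subgroup.normal_mul] at hym
  obtain ⟨m, hm, z, hz, hmz⟩ := hym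
  have hmz' : m * z = y := hmz
  obtain ⟨k, hk⟩ := Subgroup.mem_zpowers_iff.mp hz
  have hevenmem : ∀ j : ℤ, x ^ (2 * j) ∈ M := by
    intro j
    have hxe : x ^ (2 * j) = (x * x) ^ j := by rw [hsq2, ← zpow_mul]
    rw [hxe]; exact Subgroup.zpow_mem M hsq j
  rcases Int.even_or_odd k with ⟨j, hj⟩ | ⟨j, hj⟩
  · exfalso
    apply hy
    have hk' : x ^ (2 * j) = z := by rw [← hk, hj, two_mul]
    have hy' : y = m * x ^ (2 * j) := by rw [hk', hmz']
    rw [hy']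
    exact M.mul_mem hm (hevenmem j)
  · have hk' : x ^ (2 * j + 1) = z := by rw [← hk, hj]
    have hy' : y = m * x ^ (2 * j + 1) := by rw [hk', hmz']
    have hsplit : x⁻¹ * y = (x⁻¹ * m * x) * x ^ (2 * j) := by
      rw [hy', zpow_add, zpow_one, zpow_mul]; group
    rw [hsplit]
    refine M.mul_mem ?_ (hevenmem j)
    have hconj := hMn.conj_mem m hm x⁻¹
    simpa using hconj

variable (F : FusionSystem S)

private lemma bf_vunit_le_iff
    (hv : ∀ M : Subgroup S, IsCoatom M → vUnit S M ∈ F.burnsideUnits)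
    {M : Subgroup S} (hM : IsCoatom M) {P Q : Subgroup S} (hPQ : F.SubConj P Q) :
    P ≤ M ↔ Q ≤ M := by
  have h := ((hv M hM).1).2 P Q hPQ
  by_cases h1 : P ≤ M <;> by_cases h2 : Q ≤ M
  · simp [h1, h2]
  · exfalso
    simp only [vUnit, if_pos h1, if_neg h2] at h
    exact absurd h (by decide)
  · exfalso
    simp only [vUnit, if_neg h1, if_pos h2] at h
    exact absurd h (by decide)
  · simp [h1, h2]

private lemma bf_rigid (hS : IsPGroup 2 S)
    (hv : ∀ M : Subgroup S, IsCoatom M → vUnit S M ∈ F.burnsideUnits)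
    {Q R : Subgroup S} {f : ↥Q →* ↥R} (hf : f ∈ F.Hom Q R) (x : ↥Q) :
    ((f x : ↥R) : S) * ((x : S))⁻¹ ∈ sInf {M : Subgroup S | IsCoatom M} := by
  set x0 : S := (x : S) with hx0
  have hzQ : ∀ z ∈ Subgroup.zpowers x0, (1:S) * z * (1:S)⁻¹ ∈ Q := by
    intro z hz
    simpa using (Subgroup.zpowers_le.mpr x.2) hz
  have hι : conjMap (1:S) (Subgroup.zpowers x0) Q hzQ ∈ F.Hom (Subgroup.zpowers x0) Q :=
    F.conj_mem _ _ _ _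
  have hcomp : f.comp (conjMap (1:S) (Subgroup.zpowers x0) Q hzQ)
      ∈ F.Hom (Subgroup.zpowers x0) R := F.comp_mem hι hf
  obtain ⟨T₀, hT₀R, e, he, hco⟩ := F.factor_mem hcomp
  set xh : ↥(Subgroup.zpowers x0) := ⟨x0, Subgroup.mem_zpowers x0⟩ with hxh
  set y : S := ((f x : ↥R) : S) with hy
  have hcoy : ((e xh : ↥T₀) : S) = y := by
    rw [hco xh]
    show ((f (conjMap (1:S) (Subgroup.zpowers x0) Q hzQ xh) : ↥R) : S) = y
    rw [hy]
    congr 2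
    exact Subtype.ext (by simp [conjMap]; rfl)
  have hT0 : ∀ t ∈ T₀, t ∈ Subgroup.zpowers y := by
    intro t ht
    obtain ⟨z, hzz⟩ := e.surjective ⟨t, ht⟩
    obtain ⟨k, hk⟩ := Subgroup.mem_zpowers_iff.mp z.2
    have hzxk : z = xh ^ k := Subtype.ext (by simp [hxh, hk])
    have hee : (⟨t, ht⟩ : ↥T₀) = (e xh) ^ k := by rw [← hzz, hzxk, map_zpow]
    have ht' : t = y ^ k := by
      have h5 := congrArg (fun (u : ↥T₀) => (u : S)) hee
      simpa [hcoy] using h5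
    exact ht' ▸ Subgroup.zpow_mem _ (Subgroup.mem_zpowers y) k
  have key : ∀ M : Subgroup S, IsCoatom M → (x0 ∈ M ↔ y ∈ M) := by
    intro M hM
    have hsc := bf_vunit_le_iff F hv hM (P := Subgroup.zpowers x0) (Q := T₀)
      ⟨e.toMonoidHom, he, e.surjective⟩
    constructor
    · intro hx
      have hTM : T₀ ≤ M := hsc.mp (Subgroup.zpowers_le.mpr hx)
      exact hTM (hcoy ▸ (e xh).2)
    · intro hy'
      have hTM : T₀ ≤ M := fun t ht => (Subgroup.zpowers_le.mpr hy') (hT0 t ht)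
      exact hsc.mpr hTM (Subgroup.mem_zpowers x0)
  rw [Subgroup.mem_sInf]
  intro M hM
  replace hM : IsCoatom M := hM
  by_cases hx : x0 ∈ M
  · exact M.mul_mem ((key M hM).mp hx) (M.inv_mem hx)
  · have hy' : y ∉ M := fun hmem => hx ((key M hM).mpr hmem)
    have h3 := bf_coatom_diff hS hM hx hy'
    haveI := bf_coatom_normal hS hM
    have h4 := this.conj_mem _ h3 y
    have h5 : y * (x0⁻¹ * y) * y⁻¹ = y * x0⁻¹ := by group
    rwa [h5] at h4

end Statement15Aux

section Statement15Aux2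

open Subgroup Pointwise

variable {S : Type*} [Group S] [Finite S] (F : FusionSystem S)

private lemma bf_strongly_closed (hS : IsPGroup 2 S)
    (hv : ∀ M : Subgroup S, IsCoatom M → vUnit S M ∈ F.burnsideUnits) :
    F.StronglyClosed (sInf {M : Subgroup S | IsCoatom M}) := by
  intro x hx y hconj
  obtain ⟨f, hf, hfx⟩ := hconj
  have h := bf_rigid F hS hv hf ⟨x, Subgroup.mem_zpowers x⟩
  rw [hfx] at h
  have h2 : y * x⁻¹ ∈ sInf {M : Subgroup S | IsCoatom M} := h
  have h3 := (sInf {M : Subgroup S | IsCoatom M}).mul_mem h2 hx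
  simpa using h3

/-- strong closure for elements of morphisms -/
private lemma bf_mem_phi (hS : IsPGroup 2 S)
    (hv : ∀ M : Subgroup S, IsCoatom M → vUnit S M ∈ F.burnsideUnits)
    {Q R : Subgroup S} {f : ↥Q →* ↥R} (hf : f ∈ F.Hom Q R) (x : ↥Q)
    (hx : (x : S) ∈ sInf {M : Subgroup S | IsCoatom M}) :
    ((f x : ↥R) : S) ∈ sInf {M : Subgroup S | IsCoatom M} := by
  have h := bf_rigid F hS hv hf x
  have h2 := (sInf {M : Subgroup S | IsCoatom M}).mul_mem h hx
  simpa using h2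

/-- the other-side rigidity: x⁻¹ * f x ∈ Φ -/
private lemma bf_rigid' (hS : IsPGroup 2 S)
    (hv : ∀ M : Subgroup S, IsCoatom M → vUnit S M ∈ F.burnsideUnits)
    {Q R : Subgroup S} {f : ↥Q →* ↥R} (hf : f ∈ F.Hom Q R) (x : ↥Q) :
    ((x : S))⁻¹ * ((f x : ↥R) : S) ∈ sInf {M : Subgroup S | IsCoatom M} := by
  haveI := bf_frat_normal S
  have h := bf_rigid F hS hv hf x
  have h2 := this.conj_mem _ h ((x : S))⁻¹
  have h3 : (x:S)⁻¹ * (((f x : ↥R):S) * (x:S)⁻¹) * ((x:S)⁻¹)⁻¹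
      = (x:S)⁻¹ * ((f x : ↥R):S) := by group
  rwa [h3] at h2

/-- the codomain of a morphism is below domain ⊔ Φ -/
private lemma bf_le_sup_phi (hS : IsPGroup 2 S)
    (hv : ∀ M : Subgroup S, IsCoatom M → vUnit S M ∈ F.burnsideUnits)
    {Q R : Subgroup S} {f : ↥Q →* ↥R} (hf : f ∈ F.Hom Q R) :
    Q ≤ R ⊔ sInf {M : Subgroup S | IsCoatom M} := by
  intro x hxQ
  have h := bf_rigid' F hS hv hf ⟨x, hxQ⟩
  have hx : x = ((f ⟨x, hxQ⟩ : ↥R) : S) * (((x : S))⁻¹ * ((f ⟨x, hxQ⟩ : ↥R) : S))⁻¹ := by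
    group
  rw [hx]
  exact Subgroup.mul_mem _ (Subgroup.mem_sup_left (f ⟨x, hxQ⟩).2)
    (Subgroup.mem_sup_right (Subgroup.inv_mem _ h))

/-- the image of an F-iso is below domain ⊔ Φ, and the sups agree -/
private lemma bf_sup_phi_eq (hS : IsPGroup 2 S)
    (hv : ∀ M : Subgroup S, IsCoatom M → vUnit S M ∈ F.burnsideUnits)
    {Q Q' : Subgroup S} (e : ↥Q ≃* ↥Q') (he : e.toMonoidHom ∈ F.Hom Q Q') :
    Q ⊔ sInf {M : Subgroup S | IsCoatom M} = Q' ⊔ sInf {M : Subgroup S | IsCoatom M} := by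
  have h1 : Q ≤ Q' ⊔ sInf {M : Subgroup S | IsCoatom M} := bf_le_sup_phi F hS hv he
  have h2 : Q' ≤ Q ⊔ sInf {M : Subgroup S | IsCoatom M} :=
    bf_le_sup_phi F hS hv (F.isoinv_mem e he)
  exact le_antisymm (sup_le h1 le_sup_right) (sup_le h2 le_sup_right)

private lemma bf_eq_of_le_of_card_le {H K : Subgroup S} (h : H ≤ K)
    (hc : Nat.card ↥K ≤ Nat.card ↥H) : H = K := by
  have h1 : (H : Set S) ⊆ (K : Set S) := h
  have h2 : Nat.card ↥H = (H : Set S).ncard := Nat.card_coe_set_eq _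
  have h3 : Nat.card ↥K = (K : Set S).ncard := Nat.card_coe_set_eq _
  have h4 : (K : Set S).ncard ≤ (H : Set S).ncard := by omega
  exact SetLike.ext' (Set.eq_of_subset_of_ncard_le h1 h4 (Set.toFinite _))

private lemma bf_card_lt_of_lt {H K : Subgroup S} (h : H < K) :
    Nat.card ↥H < Nat.card ↥K := by
  rcases lt_or_ge (Nat.card ↥H) (Nat.card ↥K) with h1 | h1
  · exact h1
  · exact absurd (bf_eq_of_le_of_card_le h.le h1) h.ne

/-- existence of a normalizing element of Φ outside Q -/
private lemma bf_exists_normalizing (hS : IsPGroup 2 S) {Q : Subgroup S}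
    (hB : ¬ sInf {M : Subgroup S | IsCoatom M} ≤ Q) :
    ∃ b : S, b ∈ sInf {M : Subgroup S | IsCoatom M} ∧ b ∈ Subgroup.normalizer (Q : Set S) ∧ b ∉ Q := by
  haveI : Fact (Nat.Prime 2) := ⟨Nat.prime_two⟩
  haveI := bf_frat_normal S
  set Φ := sInf {M : Subgroup S | IsCoatom M}
  set U := Q ⊔ Φ with hU
  have hQU : Q ≤ U := le_sup_left
  have hlt : Q.subgroupOf U < ⊤ := by
    rcases lt_or_eq_of_le (le_top : Q.subgroupOf U ≤ ⊤) with h | h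
    · exact h
    · exfalso
      exact hB ((le_sup_right.trans (Subgroup.subgroupOf_eq_top.mp h)).trans le_rfl)
  haveI : Group.IsNilpotent ↥U := (hS.to_subgroup U).isNilpotent
  have hnc : NormalizerCondition ↥U := normalizerCondition_of_isNilpotent
  obtain ⟨u, hu_norm, hu_not⟩ := SetLike.exists_of_lt (hnc _ hlt)
  have huU : (u : S) ∈ ((Q : Set S) * (Φ : Set S)) := by
    have h : (u : S) ∈ ((Q ⊔ Φ : Subgroup S) : Set S) := u.2
    rwa [Subgroup.mul_normal] at h
  obtain ⟨q, hq, b, hb, hqb⟩ := huU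
  have hqb' : q * b = (u : S) := hqb
  have hu_normS : (u : S) ∈ Subgroup.normalizer (Q : Set S) := by
    rw [Subgroup.mem_normalizer_iff]
    intro x
    constructor
    · intro hxQ
      have hxU : x ∈ U := hQU hxQ
      have h5 := (Subgroup.mem_normalizer_iff.mp hu_norm ⟨x, hxU⟩).mp
        (by rwa [Subgroup.mem_subgroupOf])
      rw [Subgroup.mem_subgroupOf] at h5
      exact h5
    · intro hxQ'
      have hyU : (u:S) * x * (u:S)⁻¹ ∈ U := hQU hxQ'
      have hxU : x ∈ U := by
        have : x = (u:S)⁻¹ * ((u:S) * x * (u:S)⁻¹) * (u:S) := by group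
        rw [this]
        exact U.mul_mem (U.mul_mem (U.inv_mem u.2) hyU) u.2
      have h5 := (Subgroup.mem_normalizer_iff.mp hu_norm ⟨x, hxU⟩).mpr
        (by rw [Subgroup.mem_subgroupOf]; exact hxQ')
      rw [Subgroup.mem_subgroupOf] at h5
      exact h5
  refine ⟨b, hb, ?_, ?_⟩
  · have hq_norm : q ∈ Subgroup.normalizer (Q : Set S) := Subgroup.le_normalizer hq
    have : b = q⁻¹ * (u : S) := by rw [← hqb']; group
    rw [this]
    exact Subgroup.mul_mem _ (Subgroup.inv_mem _ hq_norm) hu_normS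
  · intro hbQ
    apply hu_not
    rw [Subgroup.mem_subgroupOf]
    show (u : S) ∈ Q
    rw [← hqb']
    exact Q.mul_mem hq hbQ

end Statement15Aux2

section Statement15Aux3

open Subgroup Pointwise

variable {S : Type*} [Group S] [Finite S] (F : FusionSystem S)

private lemma bf_fix_phi_mem_autS (hS : IsPGroup 2 S)
    (hv : ∀ M : Subgroup S, IsCoatom M → vUnit S M ∈ F.burnsideUnits)
    {T : Subgroup S} (hfa : F.FullyAutomized 2 T)
    {γ : MulAut ↥T} (hγF : γ ∈ F.AutF T)
    (hfix : ∀ w : ↥T, (w : S) ∈ sInf {M : Subgroup S | IsCoatom M} → γ w = w) :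
    γ ∈ AutS T := by
  haveI : Fact (Nat.Prime 2) := ⟨Nat.prime_two⟩
  haveI := bf_frat_normal S
  obtain ⟨hle, hp2, hidx⟩ := hfa
  haveI : Finite (MulAut ↥T) :=
    Finite.of_injective (fun (e : MulAut ↥T) => (e : ↥T → ↥T)) DFunLike.coe_injective
  have hmem : ∀ α : MulAut ↥T, α ∈ F.AutF T → α.toMonoidHom ∈ F.Hom T T := fun α h => h
  -- the subgroup K' of automorphisms fixing Φ ∩ T pointwise, inside AutF T
  let K' : Subgroup ↥(F.AutF T) :=
    { carrier := {κ | ∀ w : ↥T, (w : S) ∈ sInf {M : Subgroup S | IsCoatom M} →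
        ((κ : ↥(F.AutF T)) : MulAut ↥T) w = w}
      one_mem' := fun w _ => rfl
      mul_mem' := by
        intro a b ha hb w hw
        have h1 : ((a * b : ↥(F.AutF T)) : MulAut ↥T) w
            = ((a : ↥(F.AutF T)) : MulAut ↥T) (((b : ↥(F.AutF T)) : MulAut ↥T) w) := rfl
        rw [h1, hb w hw, ha w hw]
      inv_mem' := by
        intro a ha w hw
        have h1 := ha w hw
        have h2 : ((a⁻¹ : ↥(F.AutF T)) : MulAut ↥T) = (((a : ↥(F.AutF T)) : MulAut ↥T))⁻¹ := rfl
        rw [h2]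
        conv_lhs => rw [← h1]
        simp [MulAut.inv_def] }
  haveI hK'normal : K'.Normal := by
    constructor
    intro κ hκ α w hw
    have h1 : ((α * κ * α⁻¹ : ↥(F.AutF T)) : MulAut ↥T) w
        = ((α : ↥(F.AutF T)) : MulAut ↥T)
            (((κ : ↥(F.AutF T)) : MulAut ↥T)
              ((((α : ↥(F.AutF T)) : MulAut ↥T))⁻¹ w)) := rfl
    have hαinv : (((α : ↥(F.AutF T)) : MulAut ↥T))⁻¹.toMonoidHom ∈ F.Hom T T := by
      exact hmem _ (α⁻¹).2
    have hw' : (((((α : ↥(F.AutF T)) : MulAut ↥T))⁻¹ w : ↥T) : S)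
        ∈ sInf {M : Subgroup S | IsCoatom M} := bf_mem_phi F hS hv hαinv w hw
    rw [h1, hκ _ hw']
    simp [MulAut.inv_def]
  -- K' is a 2-group
  obtain ⟨v, hvcard⟩ := hS.exists_card_eq
  have hd1 : ∀ d : ↥T, d ^ ((2:ℕ) ^ v) = 1 := by
    intro d
    refine Subtype.ext ?_
    have h1 : ((d : S)) ^ (Nat.card S) = 1 := pow_card_eq_one'
    rw [hvcard] at h1
    simpa using h1
  have hK'p : IsPGroup 2 ↥K' := by
    intro κ
    refine ⟨v, ?_⟩
    have hκfix : ∀ w : ↥T, (w : S) ∈ sInf {M : Subgroup S | IsCoatom M} →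
        ((κ.1 : ↥(F.AutF T)) : MulAut ↥T) w = w := κ.2
    set c : MulAut ↥T := ((κ.1 : ↥(F.AutF T)) : MulAut ↥T) with hc
    have hdphi : ∀ x : ↥T, ((x⁻¹ * c x : ↥T) : S) ∈ sInf {M : Subgroup S | IsCoatom M} := by
      intro x
      have h := bf_rigid' F hS hv (hmem c κ.1.2) x
      simpa using h
    have key : ∀ (n : ℕ) (x : ↥T), (c ^ n) x = x * (x⁻¹ * c x) ^ n := by
      intro n
      induction n with
      | zero => intro x; simp
      | succ n ih =>
        intro x
        have hfixdx : c (x⁻¹ * c x) = x⁻¹ * c x := hκfix _ (hdphi x)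
        have h1 : (c ^ (n+1)) x = c ((c ^ n) x) := by
          rw [pow_succ']
          rfl
        rw [h1, ih x, map_mul, map_pow, hfixdx]
        have h2 : c x = x * (x⁻¹ * c x) := by group
        calc c x * (x⁻¹ * c x) ^ n = x * (x⁻¹ * c x) * (x⁻¹ * c x) ^ n := by rw [← h2]
          _ = x * (x⁻¹ * c x) ^ (n + 1) := by rw [pow_succ', mul_assoc]
    have hc1 : c ^ ((2:ℕ) ^ v) = 1 := by
      apply DFunLike.ext
      intro x
      rw [key _ x, hd1, mul_one]
      rfl
    refine Subtype.ext (Subtype.ext ?_)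
    have e1 : (((κ ^ ((2:ℕ) ^ v) : ↥K') : ↥(F.AutF T)) : MulAut ↥T)
        = c ^ ((2:ℕ) ^ v) := by push_cast [hc]; rfl
    rw [e1, hc1]
    rfl
  -- Sylow absorption
  set P' : Subgroup ↥(F.AutF T) := (AutS T).subgroupOf (F.AutF T) with hP'
  have hsup : IsPGroup 2 ↥(K' ⊔ P') := IsPGroup.to_sup_of_normal_left hK'p hp2
  have hrel : (P'.subgroupOf (K' ⊔ P')).index * (K' ⊔ P').index = P'.index :=
    Subgroup.relIndex_mul_index le_sup_right
  have hPP : K' ⊔ P' ≤ P' := by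
    by_contra hno
    obtain ⟨m, hm⟩ := hsup.exists_card_eq
    have hdvd : (P'.subgroupOf (K' ⊔ P')).index ∣ Nat.card ↥(K' ⊔ P') :=
      Subgroup.index_dvd_card _
    rw [hm] at hdvd
    obtain ⟨j, hj, hjeq⟩ := (Nat.dvd_prime_pow Nat.prime_two).mp hdvd
    have hne1 : (P'.subgroupOf (K' ⊔ P')).index ≠ 1 := by
      intro h1
      exact hno (Subgroup.subgroupOf_eq_top.mp (Subgroup.index_eq_one.mp h1))
    have hj0 : j ≠ 0 := by
      rintro rfl
      rw [pow_zero] at hjeq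
      exact hne1 hjeq
    have h2dvd : (2:ℕ) ∣ (P'.subgroupOf (K' ⊔ P')).index := hjeq ▸ dvd_pow_self 2 hj0
    exact hidx (hrel ▸ h2dvd.mul_right ((K' ⊔ P').index))
  have hγK' : (⟨γ, hγF⟩ : ↥(F.AutF T)) ∈ K' := hfix
  have hγP' := hPP (Subgroup.mem_sup_left hγK')
  rw [hP', Subgroup.mem_subgroupOf] at hγP'
  exact hγP'

private lemma bf_mem_nphi (hS : IsPGroup 2 S)
    (hv : ∀ M : Subgroup S, IsCoatom M → vUnit S M ∈ F.burnsideUnits)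
    (hab : ∀ x ∈ sInf {M : Subgroup S | IsCoatom M},
      ∀ y ∈ sInf {M : Subgroup S | IsCoatom M}, x * y = y * x)
    {Q T : Subgroup S} (ρ : ↥Q ≃* ↥T) (hρ : ρ.toMonoidHom ∈ F.Hom Q T)
    (hfa : F.FullyAutomized 2 T)
    {b : S} (hbΦ : b ∈ sInf {M : Subgroup S | IsCoatom M}) (hbn : b ∈ Subgroup.normalizer (Q : Set S)) :
    b ∈ NphiSet Q T ρ := by
  set cb : MulAut ↥Q := conjAut Q ⟨b, hbn⟩ with hcb
  have hcbmem : cb.toMonoidHom ∈ F.Hom Q Q := by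
    have h1 : ∀ x ∈ Q, b * x * b⁻¹ ∈ Q := fun x hx =>
      (Subgroup.mem_normalizer_iff.mp hbn x).mp hx
    have h2 := F.conj_mem b Q Q h1
    have h3 : conjMap b Q Q h1 = cb.toMonoidHom := by ext x; rfl
    rwa [h3] at h2
  set γ : MulAut ↥T := (ρ.symm.trans cb).trans ρ with hγ
  have hγmem : γ ∈ F.AutF T := by
    show γ.toMonoidHom ∈ F.Hom T T
    have h4 : γ.toMonoidHom = (ρ.toMonoidHom.comp cb.toMonoidHom).comp ρ.symm.toMonoidHom := by
      ext x; rfl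
    rw [h4]
    exact F.comp_mem (F.isoinv_mem ρ hρ) (F.comp_mem hcbmem hρ)
  have hγfix : ∀ w : ↥T, (w : S) ∈ sInf {M : Subgroup S | IsCoatom M} → γ w = w := by
    intro w hw
    have hz : ((ρ.symm w : ↥Q) : S) ∈ sInf {M : Subgroup S | IsCoatom M} :=
      bf_mem_phi F hS hv (F.isoinv_mem ρ hρ) w hw
    have hcz : cb (ρ.symm w) = ρ.symm w := by
      refine Subtype.ext ?_
      show b * ((ρ.symm w : ↥Q) : S) * b⁻¹ = ((ρ.symm w : ↥Q) : S)
      rw [hab b hbΦ _ hz]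
      simp
    show ρ (cb (ρ.symm w)) = w
    rw [hcz, MulEquiv.apply_symm_apply]
  have hγS := bf_fix_phi_mem_autS F hS hv hfa hγmem hγfix
  obtain ⟨s, hs⟩ := hγS
  refine ⟨hbn, (s : S), ?_⟩
  intro x hx
  have h6 : γ (ρ ⟨x, hx⟩) = ρ (cb ⟨x, hx⟩) := by
    show ρ (cb (ρ.symm (ρ ⟨x, hx⟩))) = ρ (cb ⟨x, hx⟩)
    rw [MulEquiv.symm_apply_apply]
  have h8 : conjAutHom T s (ρ ⟨x, hx⟩) = γ (ρ ⟨x, hx⟩) := by rw [hs]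
  have h9 : (s : S) * ((ρ ⟨x, hx⟩ : ↥T) : S) * ((s : S))⁻¹ = ((ρ (cb ⟨x, hx⟩) : ↥T) : S) := by
    have h10 := congrArg (fun u : ↥T => (u : S)) (h8.trans h6)
    simpa [conjAutHom, conjAut] using h10
  refine Eq.trans ?_ h9.symm
  exact congrArg (fun u : ↥Q => ((ρ u : ↥T) : S)) (Subtype.ext rfl)

end Statement15Aux3

section Statement15Aux4

open Subgroup Pointwise

variable {S : Type*} [Group S] [Finite S] (F : FusionSystem S)

private lemma bf_receptive_ext (hS : IsPGroup 2 S)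
    (hv : ∀ M : Subgroup S, IsCoatom M → vUnit S M ∈ F.burnsideUnits)
    (hab : ∀ x ∈ sInf {M : Subgroup S | IsCoatom M},
      ∀ y ∈ sInf {M : Subgroup S | IsCoatom M}, x * y = y * x)
    {Q T : Subgroup S} (ρ : ↥Q ≃* ↥T) (hρ : ρ.toMonoidHom ∈ F.Hom Q T)
    (hfa : F.FullyAutomized 2 T) (hrec : F.Receptive T)
    {b : S} (hbΦ : b ∈ sInf {M : Subgroup S | IsCoatom M})
    (hbn : b ∈ Subgroup.normalizer (Q : Set S)) (hbQ : b ∉ Q) :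
    ∃ (Q₂ : Subgroup S) (ψ : ↥Q₂ →* ↥(⊤ : Subgroup S)),
      ψ ∈ F.Hom Q₂ ⊤ ∧ Q ≤ Q₂ ∧ Nat.card ↥Q < Nat.card ↥Q₂ ∧
      Q₂ ⊔ sInf {M : Subgroup S | IsCoatom M} = Q ⊔ sInf {M : Subgroup S | IsCoatom M} ∧
      ∀ (z : S) (hz2 : z ∈ Q₂) (hz : z ∈ Q),
        ((ψ ⟨z, hz2⟩ : ↥(⊤ : Subgroup S)) : S) = ((ρ ⟨z, hz⟩ : ↥T) : S) := by
  obtain ⟨T₁, hT₁set, ψ₁, hψ₁, hagree⟩ := hrec Q ρ hρ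
  have hmul : ∀ (q : S) (hq : q ∈ Q) (x : S) (hx : x ∈ Q) (pf : q * x * q⁻¹ ∈ Q),
      ((ρ ⟨q * x * q⁻¹, pf⟩ : ↥T) : S)
        = ((ρ ⟨q, hq⟩ : ↥T) : S) * ((ρ ⟨x, hx⟩ : ↥T) : S) * (((ρ ⟨q, hq⟩ : ↥T) : S))⁻¹ := by
    intro q hq x hx pf
    have h2 : (⟨q * x * q⁻¹, pf⟩ : ↥Q) = ⟨q, hq⟩ * ⟨x, hx⟩ * (⟨q, hq⟩)⁻¹ := Subtype.ext rfl
    rw [h2, map_mul, map_mul, map_inv]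
    simp
  have hQT₁ : Q ≤ T₁ := by
    intro q hq
    rw [← SetLike.mem_coe, hT₁set]
    exact ⟨Subgroup.le_normalizer hq, ((ρ ⟨q, hq⟩ : ↥T) : S),
      fun x hx => hmul q hq x hx _⟩
  have hbT₁ : b ∈ T₁ := by
    rw [← SetLike.mem_coe, hT₁set]
    exact bf_mem_nphi F hS hv hab ρ hρ hfa hbΦ hbn
  set Q₂ := Q ⊔ Subgroup.zpowers b with hQ₂def
  have hQ₂T₁ : Q₂ ≤ T₁ := sup_le hQT₁ (Subgroup.zpowers_le.mpr hbT₁)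
  have hQQ₂ : Q ≤ Q₂ := le_sup_left
  have hconj : ∀ x ∈ Q₂, (1:S) * x * (1:S)⁻¹ ∈ T₁ := fun x hx => by simpa using hQ₂T₁ hx
  have hinc : conjMap 1 Q₂ T₁ hconj ∈ F.Hom Q₂ T₁ := F.conj_mem _ _ _ _
  refine ⟨Q₂, ψ₁.comp (conjMap 1 Q₂ T₁ hconj), F.comp_mem hinc hψ₁, hQQ₂, ?_, ?_, ?_⟩
  · refine bf_card_lt_of_lt (lt_of_le_of_ne hQQ₂ ?_)
    intro heq
    apply hbQ
    rw [heq]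
    exact Subgroup.mem_sup_right (Subgroup.mem_zpowers b)
  · rw [hQ₂def, sup_assoc, sup_eq_right.mpr (Subgroup.zpowers_le.mpr hbΦ)]
  · intro z hz2 hz
    have h1 : conjMap 1 Q₂ T₁ hconj ⟨z, hz2⟩ = ⟨z, hQ₂T₁ hz2⟩ :=
      Subtype.ext (by simp [conjMap])
    have h2 : (ψ₁.comp (conjMap 1 Q₂ T₁ hconj)) ⟨z, hz2⟩ = ψ₁ ⟨z, hQ₂T₁ hz2⟩ := by
      rw [MonoidHom.comp_apply, h1]
    rw [h2]
    exact hagree z hz (hQ₂T₁ hz2)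

private lemma bf_caseA (hS : IsPGroup 2 S)
    (hv : ∀ M : Subgroup S, IsCoatom M → vUnit S M ∈ F.burnsideUnits)
    {Q Q' : Subgroup S} (e : ↥Q ≃* ↥Q')
    (he : e.toMonoidHom ∈ F.Hom Q Q')
    (hΦQ : sInf {M : Subgroup S | IsCoatom M} ≤ Q) :
    ∃ ψ ∈ F.Hom (Q ⊔ sInf {M : Subgroup S | IsCoatom M})
        (Q ⊔ sInf {M : Subgroup S | IsCoatom M}),
      ∀ (z : ↥(Q ⊔ sInf {M : Subgroup S | IsCoatom M})) (hz : (z : S) ∈ Q),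
        ((ψ z : ↥(Q ⊔ sInf {M : Subgroup S | IsCoatom M})) : S)
          = ((e ⟨(z : S), hz⟩ : ↥Q') : S) := by
  have hQ'Q : Q' = Q := by
    have h1 : Q' ≤ Q ⊔ sInf {M : Subgroup S | IsCoatom M} :=
      bf_le_sup_phi F hS hv (F.isoinv_mem e he)
    rw [sup_eq_left.mpr hΦQ] at h1
    exact bf_eq_of_le_of_card_le h1 (le_of_eq (Nat.card_congr e.toEquiv))
  subst hQ'Q
  rw [sup_eq_left.mpr hΦQ]
  exact ⟨e.toMonoidHom, he,
    fun z hz => congrArg (fun u : ↥Q' => ((e u : ↥Q') : S)) (Subtype.ext rfl)⟩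

private lemma bf_iso_ext (hS : IsPGroup 2 S) (hF : F.IsSaturated 2)
    (hv : ∀ M : Subgroup S, IsCoatom M → vUnit S M ∈ F.burnsideUnits)
    (hab : ∀ x ∈ sInf {M : Subgroup S | IsCoatom M},
      ∀ y ∈ sInf {M : Subgroup S | IsCoatom M}, x * y = y * x) :
    ∀ (n : ℕ) (Q Q' : Subgroup S) (e : ↥Q ≃* ↥Q'),
      e.toMonoidHom ∈ F.Hom Q Q' → Nat.card S ≤ n + Nat.card ↥Q →
      ∃ ψ ∈ F.Hom (Q ⊔ sInf {M : Subgroup S | IsCoatom M})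
          (Q ⊔ sInf {M : Subgroup S | IsCoatom M}),
        ∀ (z : ↥(Q ⊔ sInf {M : Subgroup S | IsCoatom M})) (hz : (z : S) ∈ Q),
          ((ψ z : ↥(Q ⊔ sInf {M : Subgroup S | IsCoatom M})) : S)
            = ((e ⟨(z : S), hz⟩ : ↥Q') : S) := by
  intro n
  induction n with
  | zero =>
    intro Q Q' e he hn
    have hQtop : Q = ⊤ := by
      refine bf_eq_of_le_of_card_le le_top ?_
      have h2 : Nat.card ↥(⊤ : Subgroup S) = Nat.card S := Subgroup.card_top
      omega
    exact bf_caseA F hS hv e he (hQtop ▸ le_top)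
  | succ n ih =>
    intro Q Q' e he hn
    by_cases hΦQ : sInf {M : Subgroup S | IsCoatom M} ≤ Q
    · exact bf_caseA F hS hv e he hΦQ
    · obtain ⟨T, hconjT, hfa, hrec⟩ := hF Q'
      obtain ⟨f, hfmem, hfsurj⟩ := hconjT
      set τ : ↥Q' ≃* ↥T := MulEquiv.ofBijective f ⟨F.inj hfmem, hfsurj⟩ with hτdef
      have hτ : τ.toMonoidHom ∈ F.Hom Q' T := by
        have h0 : τ.toMonoidHom = f := by ext x; rfl
        rwa [h0]
      set ρ : ↥Q ≃* ↥T := e.trans τ with hρdef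
      have hρ : ρ.toMonoidHom ∈ F.Hom Q T := by
        have h0 : ρ.toMonoidHom = τ.toMonoidHom.comp e.toMonoidHom := by ext x; rfl
        rw [h0]; exact F.comp_mem he hτ
      have hcard_e : Nat.card ↥Q = Nat.card ↥Q' := Nat.card_congr e.toEquiv
      have hΦQ' : ¬ sInf {M : Subgroup S | IsCoatom M} ≤ Q' := by
        intro hcon
        apply hΦQ
        have h1 : Q ≤ Q' ⊔ sInf {M : Subgroup S | IsCoatom M} := bf_le_sup_phi F hS hv he
        rw [sup_eq_left.mpr hcon] at h1
        have h2 := bf_eq_of_le_of_card_le h1 (le_of_eq hcard_e.symm)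
        rw [h2]; exact hcon
      obtain ⟨b, hbΦ, hbn, hbQ⟩ := bf_exists_normalizing hS hΦQ
      obtain ⟨Q₂, ψ₂, hψ₂, hQQ₂, hcard₂, hsup₂, hagree₂⟩ :=
        bf_receptive_ext F hS hv hab ρ hρ hfa hrec hbΦ hbn hbQ
      obtain ⟨Q₂', hQ₂'top, e₂, he₂, hco₂⟩ := F.factor_mem hψ₂
      have harith₂ : Nat.card S ≤ n + Nat.card ↥Q₂ := by omega
      have H₂ := ih Q₂ Q₂' e₂ he₂ harith₂
      rw [hsup₂] at H₂
      obtain ⟨Ψ₀, hΨ₀, hres₀⟩ := H₂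
      obtain ⟨b', hb'Φ, hb'n, hb'Q⟩ := bf_exists_normalizing hS hΦQ'
      obtain ⟨Q₃, ψ₃, hψ₃, hQ'Q₃, hcard₃, hsup₃, hagree₃⟩ :=
        bf_receptive_ext F hS hv hab τ hτ hfa hrec hb'Φ hb'n hb'Q
      obtain ⟨Q₃', hQ₃'top, e₃, he₃, hco₃⟩ := F.factor_mem hψ₃
      have harith₃ : Nat.card S ≤ n + Nat.card ↥Q₃ := by omega
      have H₃ := ih Q₃ Q₃' e₃ he₃ harith₃
      have hsupQ' : Q' ⊔ sInf {M : Subgroup S | IsCoatom M}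
          = Q ⊔ sInf {M : Subgroup S | IsCoatom M} := (bf_sup_phi_eq F hS hv e he).symm
      rw [hsup₃, hsupQ'] at H₃
      obtain ⟨Ψ₁, hΨ₁, hres₁⟩ := H₃
      have hinj : Function.Injective Ψ₁ := F.inj hΨ₁
      have hbij : Function.Bijective Ψ₁ := Finite.injective_iff_bijective.mp hinj
      set E := MulEquiv.ofBijective Ψ₁ hbij with hEdef
      have hE : E.toMonoidHom ∈ F.Hom (Q ⊔ sInf {M : Subgroup S | IsCoatom M})
          (Q ⊔ sInf {M : Subgroup S | IsCoatom M}) := by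
        have h0 : E.toMonoidHom = Ψ₁ := by ext x; rfl
        rwa [h0]
      have hEsymm := F.isoinv_mem E hE
      refine ⟨E.symm.toMonoidHom.comp Ψ₀, F.comp_mem hΨ₀ hEsymm, ?_⟩
      intro z hz
      have hzQ₂ : (z : S) ∈ Q₂ := hQQ₂ hz
      have hyQ' : ((e ⟨(z : S), hz⟩ : ↥Q') : S) ∈ Q' := (e ⟨(z : S), hz⟩).2
      have hQ'le : Q' ≤ Q ⊔ sInf {M : Subgroup S | IsCoatom M} :=
        bf_le_sup_phi F hS hv (F.isoinv_mem e he)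
      set y : ↥(Q ⊔ sInf {M : Subgroup S | IsCoatom M}) :=
        ⟨((e ⟨(z : S), hz⟩ : ↥Q') : S), hQ'le hyQ'⟩ with hydef
      have hyQ₃ : (y : S) ∈ Q₃ := hQ'Q₃ hyQ'
      have hstep1 : ((Ψ₀ z : ↥(Q ⊔ sInf {M : Subgroup S | IsCoatom M})) : S)
          = ((ρ ⟨(z : S), hz⟩ : ↥T) : S) := by
        rw [hres₀ z hzQ₂, hco₂ ⟨(z : S), hzQ₂⟩]
        exact hagree₂ (z : S) hzQ₂ hz
      have hstep2 : ((Ψ₁ y : ↥(Q ⊔ sInf {M : Subgroup S | IsCoatom M})) : S)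
          = ((τ ⟨(y : S), hyQ'⟩ : ↥T) : S) := by
        rw [hres₁ y hyQ₃, hco₃ ⟨(y : S), hyQ₃⟩]
        exact hagree₃ (y : S) hyQ₃ hyQ'
      have hstep3 : (τ ⟨(y : S), hyQ'⟩ : ↥T) = ρ ⟨(z : S), hz⟩ := by
        show τ ⟨(y : S), hyQ'⟩ = τ (e ⟨(z : S), hz⟩)
        exact congrArg τ (Subtype.ext rfl)
      have hΨeq : Ψ₀ z = Ψ₁ y := by
        refine Subtype.ext ?_
        rw [hstep1, hstep2, hstep3]
      have hEy : E y = Ψ₁ y := rfl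
      show ((E.symm (Ψ₀ z) : ↥(Q ⊔ sInf {M : Subgroup S | IsCoatom M})) : S)
          = ((e ⟨(z : S), hz⟩ : ↥Q') : S)
      rw [hΨeq, ← hEy, MulEquiv.symm_apply_apply]

end Statement15Aux4

theorem statement15 {S : Type*} [Group S] [Finite S] (hS : IsPGroup 2 S)
    (F : FusionSystem S) (hF : F.IsSaturated 2)
    (hv : ∀ M : Subgroup S, IsCoatom M → vUnit S M ∈ F.burnsideUnits) :
    F.StronglyClosed (sInf {M : Subgroup S | IsCoatom M}) ∧
    ((∀ x ∈ sInf {M : Subgroup S | IsCoatom M},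
        ∀ y ∈ sInf {M : Subgroup S | IsCoatom M}, x * y = y * x) →
      F.NormalIn (sInf {M : Subgroup S | IsCoatom M})) := by
  constructor
  · exact bf_strongly_closed F hS hv
  · intro hab Q R φ hφ
    obtain ⟨Q', hQ'R, e, he, hco⟩ := F.factor_mem hφ
    obtain ⟨ψ₀, hψ₀, hres⟩ :=
      bf_iso_ext F hS hF hv hab (Nat.card S) Q Q' e he (Nat.le_add_right _ _)
    have hle : Q ⊔ sInf {M : Subgroup S | IsCoatom M}
        ≤ R ⊔ sInf {M : Subgroup S | IsCoatom M} :=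
      sup_le (bf_le_sup_phi F hS hv hφ) le_sup_right
    have hconj1 : ∀ x ∈ Q ⊔ sInf {M : Subgroup S | IsCoatom M},
        (1:S) * x * (1:S)⁻¹ ∈ R ⊔ sInf {M : Subgroup S | IsCoatom M} :=
      fun x hx => by simpa using hle hx
    have hinc : conjMap 1 _ _ hconj1 ∈ F.Hom (Q ⊔ sInf {M : Subgroup S | IsCoatom M})
        (R ⊔ sInf {M : Subgroup S | IsCoatom M}) := F.conj_mem _ _ _ _
    set ψ := (conjMap 1 _ _ hconj1).comp ψ₀ with hψdef
    have hψmem : ψ ∈ F.Hom (Q ⊔ sInf {M : Subgroup S | IsCoatom M})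
        (R ⊔ sInf {M : Subgroup S | IsCoatom M}) := F.comp_mem hψ₀ hinc
    have hcoψ : ∀ (z : ↥(Q ⊔ sInf {M : Subgroup S | IsCoatom M})),
        ((ψ z : ↥(R ⊔ sInf {M : Subgroup S | IsCoatom M})) : S)
          = ((ψ₀ z : ↥(Q ⊔ sInf {M : Subgroup S | IsCoatom M})) : S) := by
      intro z
      show ((conjMap 1 _ _ hconj1 (ψ₀ z) : ↥(R ⊔ sInf {M : Subgroup S | IsCoatom M})) : S) = _
      simp [conjMap]
    refine ⟨ψ, hψmem, ?_, ?_, ?_⟩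
    · intro x hx
      calc ((ψ ⟨x, Subgroup.mem_sup_left hx⟩
              : ↥(R ⊔ sInf {M : Subgroup S | IsCoatom M})) : S)
          = ((ψ₀ ⟨x, Subgroup.mem_sup_left hx⟩
              : ↥(Q ⊔ sInf {M : Subgroup S | IsCoatom M})) : S) := hcoψ _
        _ = ((e ⟨x, hx⟩ : ↥Q') : S) := hres ⟨x, Subgroup.mem_sup_left hx⟩ hx
        _ = ((φ ⟨x, hx⟩ : ↥R) : S) := hco ⟨x, hx⟩
    · intro x hx
      exact bf_mem_phi F hS hv hψmem ⟨x, Subgroup.mem_sup_right hx⟩ hx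
    · intro y hy
      set g : ↥(sInf {M : Subgroup S | IsCoatom M}) → ↥(sInf {M : Subgroup S | IsCoatom M}) :=
        fun w => ⟨((ψ ⟨(w : S), Subgroup.mem_sup_right w.2⟩
          : ↥(R ⊔ sInf {M : Subgroup S | IsCoatom M})) : S),
          bf_mem_phi F hS hv hψmem _ w.2⟩ with hgdef
      have hginj : Function.Injective g := by
        intro w₁ w₂ hw
        simp only [hgdef] at hw
        have h1 : (ψ ⟨(w₁ : S), Subgroup.mem_sup_right w₁.2⟩
              : ↥(R ⊔ sInf {M : Subgroup S | IsCoatom M}))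
            = ψ ⟨(w₂ : S), Subgroup.mem_sup_right w₂.2⟩ :=
          Subtype.ext (congrArg
            (Subtype.val : ↥(sInf {M : Subgroup S | IsCoatom M}) → S) hw)
        have h2 := F.inj hψmem h1
        have h3 := congrArg
          (Subtype.val : ↥(Q ⊔ sInf {M : Subgroup S | IsCoatom M}) → S) h2
        exact Subtype.ext h3
      have hgsurj := Finite.injective_iff_surjective.mp hginj
      obtain ⟨w, hw⟩ := hgsurj ⟨y, hy⟩
      simp only [hgdef] at hw
      exact ⟨(w : S), w.2, congrArg Subtype.val hw⟩


end BurnsideFusion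
end
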